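/- arXiv:2103.10508 — 5 statements merged into one kernel-verified Lean document; each statement's English description precedes it below -/
import Mathlib

section
/- Fix a > 0. Let (E_j)_{j≥1} be i.i.d. exponential random variables with mean 1 and set S_i = Σ_{j=1}^i E_j/(2 + j·a). Then almost surely there exists i_0 ≥ 2 such that S_i ≥ (1/(2a))·log i for all i ≥ i_0. -/
open MeasureTheory ProbabilityTheory Filter Real

/-- `X` is an exponential random variable with rate `r` under `μ`. -/
def IsExpRV {Ω : Type*} [MeasurableSpace Ω] (μ : Measure Ω) (r : ℝ) (X : Ω → ℝ) : Prop :=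
  Measurable X ∧ ∀ t : ℝ, 0 ≤ t → μ {ω | X ω > t} = ENNReal.ofReal (Real.exp (-(r * t)))

section Aux

variable {Ω : Type*} [MeasurableSpace Ω] {μ : Measure Ω} [IsProbabilityMeasure μ] {X : Ω → ℝ}

lemma isExpRV_ae_pos (h : IsExpRV μ 1 X) : ∀ᵐ ω ∂μ, 0 < X ω := by
  have h0 := h.2 0 le_rfl
  rw [ae_iff]
  have hset : {ω | ¬ 0 < X ω} = {ω | X ω > 0}ᶜ := by ext ω; simp
  have hmeas : MeasurableSet {ω | X ω > 0} := measurableSet_lt measurable_const h.1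
  rw [hset, measure_compl hmeas (measure_ne_top _ _), h0, measure_univ]
  simp

lemma isExpRV_meas_le_zero (h : IsExpRV μ 1 X) : μ {ω | X ω ≤ 0} = 0 := by
  have h1 := isExpRV_ae_pos h
  rw [ae_iff] at h1
  convert h1 using 2
  ext ω; simp

lemma isExpRV_meas_ge (h : IsExpRV μ 1 X) {t : ℝ} (ht : 0 < t) :
    μ {ω | t ≤ X ω} = ENNReal.ofReal (Real.exp (-t)) := by
  refine le_antisymm ?_ ?_
  · have key : ∀ n : ℕ, μ {ω | t ≤ X ω} ≤ ENNReal.ofReal (Real.exp (-(t - t / (n + 1)))) := by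
      intro n
      have hle : (0:ℝ) ≤ t - t / (n + 1) := by
        have h1 : t / (n + 1) ≤ t := by
          apply div_le_self ht.le
          have : (0:ℝ) ≤ (n:ℝ) := Nat.cast_nonneg n
          linarith
        linarith
      have h2 := h.2 _ hle
      rw [one_mul] at h2
      rw [← h2]
      apply measure_mono
      intro ω hω
      simp only [Set.mem_setOf_eq] at *
      have h3 : (0:ℝ) < t / (n + 1) := by positivity
      linarith
    have hlim : Tendsto (fun n : ℕ => ENNReal.ofReal (Real.exp (-(t - t / (n + 1)))))
        atTop (nhds (ENNReal.ofReal (Real.exp (-t)))) := by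
      have h1 : Tendsto (fun n : ℕ => t / ((n:ℝ) + 1)) atTop (nhds 0) := by
        have := tendsto_one_div_add_atTop_nhds_zero_nat.const_mul t
        simpa [mul_one_div, div_eq_mul_inv] using this
      have h2 : Tendsto (fun n : ℕ => -(t - t / ((n:ℝ) + 1))) atTop (nhds (-t)) := by
        have hc : Tendsto (fun _ : ℕ => t) atTop (nhds t) := tendsto_const_nhds
        have h3 := hc.sub h1
        simpa using h3.neg
      exact (ENNReal.continuous_ofReal.tendsto _).comp ((Real.continuous_exp.tendsto _).comp h2)
    exact ge_of_tendsto' hlim key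
  · have h2 := h.2 t ht.le
    rw [one_mul] at h2
    rw [← h2]
    exact measure_mono (Set.setOf_subset_setOf.2 fun ω => le_of_lt)

lemma isExpRV_meas_lt (h : IsExpRV μ 1 X) {t : ℝ} (ht : 0 < t) :
    μ {ω | X ω < t} = ENNReal.ofReal (1 - Real.exp (-t)) := by
  have hset : {ω | X ω < t} = {ω | t ≤ X ω}ᶜ := by ext ω; simp [not_le]
  have hmeas : MeasurableSet {ω | t ≤ X ω} := measurableSet_le measurable_const h.1
  rw [hset, measure_compl hmeas (measure_ne_top _ _), measure_univ, isExpRV_meas_ge h ht,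
    ENNReal.ofReal_sub _ (Real.exp_nonneg _), ENNReal.ofReal_one]

lemma integrable_exp_mul_nonpos {Y : Ω → ℝ} (hm : Measurable Y) (h0 : ∀ᵐ ω ∂μ, 0 ≤ Y ω)
    {t : ℝ} (ht : t ≤ 0) : Integrable (fun ω => Real.exp (t * Y ω)) μ := by
  refine (integrable_const (1:ℝ)).mono' ((hm.const_mul t).exp.aestronglyMeasurable) ?_
  filter_upwards [h0] with ω hω
  rw [Real.norm_eq_abs, abs_of_pos (Real.exp_pos _)]
  rw [Real.exp_le_one_iff]
  exact mul_nonpos_iff.2 (Or.inr ⟨ht, hω⟩)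

lemma isExpRV_mgf (h : IsExpRV μ 1 X) : mgf X μ (-(1/2)) = 2/3 := by
  have hint : ∫⁻ ω, ENNReal.ofReal (Real.exp (-(1/2) * X ω)) ∂μ = ENNReal.ofReal (2/3) := by
    rw [lintegral_eq_lintegral_meas_lt μ (ae_of_all _ fun ω => (Real.exp_pos _).le)
      ((h.1.const_mul _).exp.aemeasurable)]
    have hsplit : Set.Ioi (0:ℝ) = Set.Ioo 0 1 ∪ Set.Ici 1 :=
      (Set.Ioo_union_Ici_eq_Ioi one_pos).symm
    have hd : Disjoint (Set.Ioo (0:ℝ) 1) (Set.Ici 1) :=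
      Set.disjoint_left.2 fun s hs hs' => absurd hs.2 (not_lt.2 hs')
    rw [hsplit, lintegral_union measurableSet_Ici hd]
    have h2 : ∫⁻ s in Set.Ici (1:ℝ), μ {a | s < Real.exp (-(1/2) * X a)} = 0 := by
      have hcong : ∫⁻ s in Set.Ici (1:ℝ), μ {a | s < Real.exp (-(1/2) * X a)}
          = ∫⁻ _ in Set.Ici (1:ℝ), (0:ENNReal) := by
        apply setLIntegral_congr_fun measurableSet_Ici
        intro s hs
        refine measure_mono_null ?_ (isExpRV_meas_le_zero h)
        intro a ha
        simp only [Set.mem_setOf_eq] at *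
        by_contra hX
        push_neg at hX
        have hlt : Real.exp (-(1/2) * X a) < 1 := by
          rw [Real.exp_lt_one_iff]
          nlinarith
        have hs' : (1:ℝ) ≤ s := hs
        linarith
      rw [hcong, lintegral_zero]
    have h1 : ∫⁻ s in Set.Ioo (0:ℝ) 1, μ {a | s < Real.exp (-(1/2) * X a)}
        = ENNReal.ofReal (2/3) := by
      have hcong : ∫⁻ s in Set.Ioo (0:ℝ) 1, μ {a | s < Real.exp (-(1/2) * X a)}
          = ∫⁻ s in Set.Ioo (0:ℝ) 1, ENNReal.ofReal (1 - s^2) := by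
        apply setLIntegral_congr_fun measurableSet_Ioo
        intro s hs
        obtain ⟨hs0, hs1⟩ := hs
        have hlog : Real.log s < 0 := Real.log_neg hs0 hs1
        have hset : {a | s < Real.exp (-(1/2) * X a)} = {a | X a < -2 * Real.log s} := by
          ext a
          simp only [Set.mem_setOf_eq]
          rw [← Real.log_lt_iff_lt_exp hs0]
          constructor <;> intro <;> linarith
        dsimp only
        rw [hset, isExpRV_meas_lt h (by linarith : (0:ℝ) < -2 * Real.log s)]
        congr 1
        have hexp : Real.exp (-(-2 * Real.log s)) = s^2 := by
          rw [show -(-2 * Real.log s) = 2 * Real.log s by ring]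
          rw [show (2:ℝ) * Real.log s = Real.log (s^2) by rw [Real.log_pow]; norm_num]
          exact Real.exp_log (by positivity)
        rw [hexp]
      rw [hcong]
      have hii : IntervalIntegrable (fun s : ℝ => 1 - s^2) volume 0 1 :=
        intervalIntegrable_const.sub ((intervalIntegral.intervalIntegrable_pow 2))
      have hio : IntegrableOn (fun s : ℝ => 1 - s^2) (Set.Ioo 0 1) volume :=
        (intervalIntegrable_iff_integrableOn_Ioo_of_le zero_le_one).1 hii
      rw [← ofReal_integral_eq_lintegral_ofReal hio ?_]
      · congr 1
        have heq : ∫ s in Set.Ioo (0:ℝ) 1, (1 - s^2) = ∫ s in (0:ℝ)..1, (1 - s^2) := by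
          rw [intervalIntegral.integral_of_le zero_le_one, integral_Ioc_eq_integral_Ioo]
        rw [heq, intervalIntegral.integral_sub intervalIntegrable_const
          ((intervalIntegral.intervalIntegrable_pow 2))]
        simp [integral_pow]
        norm_num
      · rw [EventuallyLE, ae_restrict_iff' measurableSet_Ioo]
        apply ae_of_all
        intro s hs
        simp only [Pi.zero_apply]
        nlinarith [hs.1, hs.2]
    rw [h1, h2, add_zero]
  unfold mgf
  rw [integral_eq_lintegral_of_nonneg_ae (ae_of_all _ fun ω => (Real.exp_pos _).le)
    ((h.1.const_mul _).exp.aestronglyMeasurable)]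
  rw [hint]
  rw [ENNReal.toReal_ofReal (by norm_num)]

lemma sum_pow_blocks (f : ℕ → ℝ) {K m : ℕ} (h : K ≤ m) :
    ∑ k ∈ Finset.Ico K m, ∑ j ∈ Finset.Ioc (2^k) (2^(k+1)), f j
      = ∑ j ∈ Finset.Ioc (2^K) (2^m), f j := by
  induction m, h using Nat.le_induction with
  | base => simp
  | succ m hKm ih =>
      rw [Finset.sum_Ico_succ_top hKm, ih,
        Finset.sum_Ioc_consecutive f (Nat.pow_le_pow_right (by norm_num) hKm)
          (Nat.pow_le_pow_right (by norm_num) (Nat.le_succ m))]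

end Aux

theorem atlas_stationary_positions_grow_log
    {Ω : Type*} [MeasurableSpace Ω] (μ : Measure Ω) [IsProbabilityMeasure μ]
    (a : ℝ) (ha : 0 < a)
    (E : ℕ → Ω → ℝ)
    (hindep : iIndepFun E μ)
    (hexp : ∀ j, IsExpRV μ 1 (E j)) :
    ∀ᵐ ω ∂μ, ∃ i₀ : ℕ, 2 ≤ i₀ ∧ ∀ i ≥ i₀,
      (1 / (2*a)) * Real.log i ≤ ∑ j ∈ Finset.Icc 1 i, E j ω / (2 + j * a) := by
  classical
  have hmeas : ∀ j, Measurable (E j) := fun j => (hexp j).1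
  have hpos : ∀ᵐ ω ∂μ, ∀ j, 0 < E j ω := ae_all_iff.2 fun j => isExpRV_ae_pos (hexp j)
  set q : ℝ := Real.exp (3/8) * (2/3) with hqdef
  have hq0 : 0 < q := by positivity
  have hexp38 : Real.exp (3/8) < 3/2 := by
    have h8 : Real.exp (3/8) ^ 8 < (3/2:ℝ)^8 := by
      have e1 : Real.exp (3/8) ^ 8 = Real.exp 3 := by
        rw [← Real.exp_nat_mul]; norm_num
      have e2 : Real.exp 3 = Real.exp 1 ^ 3 := by
        rw [← Real.exp_nat_mul]; norm_num
      rw [e1, e2]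
      calc Real.exp 1 ^ 3 < 2.7182818286 ^ 3 := by
            apply pow_lt_pow_left₀ Real.exp_one_lt_d9 (Real.exp_pos 1).le
            norm_num
        _ < (3/2:ℝ)^8 := by norm_num
    exact lt_of_pow_lt_pow_left₀ 8 (by norm_num) h8
  have hq1 : q < 1 := by
    rw [hqdef]
    nlinarith [Real.exp_pos (3/8)]
  set T : ℕ → Ω → ℝ := fun k ω => ∑ j ∈ Finset.Ioc (2^k) (2^(k+1)), E j ω with hTdef
  set C : ℕ → Set Ω := fun k => {ω | T k ω ≤ 3/4 * 2^k} with hCdef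
  have hTmeas : ∀ k, Measurable (T k) := fun k => Finset.measurable_sum _ fun j _ => hmeas j
  have hmgfT : ∀ k, mgf (T k) μ (-(1/2)) = (2/3 : ℝ) ^ (2^k) := by
    intro k
    have hsum : T k = ∑ j ∈ Finset.Ioc (2^k) (2^(k+1)), E j := by
      funext ω; simp [hTdef, Finset.sum_apply]
    rw [hsum, hindep.mgf_sum hmeas]
    have hcard : 2^(k+1) - 2^k = 2^k := by
      rw [pow_succ]; omega
    rw [Finset.prod_congr rfl fun j _ => isExpRV_mgf (hexp j), Finset.prod_const, Nat.card_Ioc,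
      hcard]
  have hC_bound : ∀ k, μ (C k) ≤ ENNReal.ofReal (q ^ (2^k)) := by
    intro k
    have h_int : Integrable (fun ω => Real.exp (-(1/2) * T k ω)) μ := by
      apply integrable_exp_mul_nonpos (hTmeas k) _ (by norm_num)
      filter_upwards [hpos] with ω hω
      exact Finset.sum_nonneg fun j _ => (hω j).le
    have hch := measure_le_le_exp_mul_mgf (μ := μ) (X := T k) (3/4 * 2^k)
      (by norm_num : (-(1/2):ℝ) ≤ 0) h_int
    rw [hmgfT k] at hch
    have heq : Real.exp (-(-(1/2)) * (3/4 * 2^k)) * (2/3:ℝ)^(2^k) = q ^ (2^k) := by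
      rw [hqdef, mul_pow]
      congr 1
      rw [← Real.exp_nat_mul]
      congr 1
      push_cast
      ring
    rw [heq] at hch
    have hre : μ (C k) = ENNReal.ofReal ((μ (C k)).toReal) :=
      (ENNReal.ofReal_toReal (measure_ne_top _ _)).symm
    rw [hre]
    apply ENNReal.ofReal_le_ofReal
    simpa [hCdef, measureReal_def] using hch
  have hsummable : (∑' k, μ (C k)) ≠ ⊤ := by
    have hs : Summable (fun k : ℕ => q ^ (2^k)) := by
      apply Summable.of_nonneg_of_le (fun k => pow_nonneg hq0.le _) (fun k => ?_)
        (summable_geometric_of_lt_one hq0.le hq1)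
      exact pow_le_pow_of_le_one hq0.le hq1.le (Nat.lt_two_pow_self (n := k)).le
    apply ne_top_of_le_ne_top (b := ENNReal.ofReal (∑' k : ℕ, q ^ (2^k)))
      ENNReal.ofReal_ne_top
    calc ∑' k, μ (C k) ≤ ∑' k, ENNReal.ofReal (q ^ (2^k)) := ENNReal.tsum_le_tsum hC_bound
      _ = ENNReal.ofReal (∑' k : ℕ, q ^ (2^k)) :=
          (ENNReal.ofReal_tsum_of_nonneg (fun k => pow_nonneg hq0.le _) hs).symm
  have hBC : ∀ᵐ ω ∂μ, ∀ᶠ k in atTop, ω ∉ C k := ae_eventually_notMem hsummable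
  obtain ⟨K1, hK1⟩ : ∃ n : ℕ, 40 / a < 2 ^ n := pow_unbounded_of_one_lt (40 / a) one_lt_two
  have hK1' : (40:ℝ) < 2 ^ K1 * a := by
    rw [div_lt_iff₀ ha] at hK1
    linarith
  filter_upwards [hpos, hBC] with ω hω hbc
  obtain ⟨K0, hK0⟩ := eventually_atTop.1 hbc
  set K := max K0 K1 with hKdef
  have hblock : ∀ k, K ≤ k →
      5/7 * (1/(2*a)) ≤ ∑ j ∈ Finset.Ioc (2^k) (2^(k+1)), E j ω / (2 + j * a) := by
    intro k hk
    have hTk : 3/4 * 2^k < T k ω := by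
      have h1 := hK0 k (le_trans (le_max_left _ _) hk)
      simp only [hCdef, Set.mem_setOf_eq, not_le] at h1
      exact h1
    have hD : (0:ℝ) < 2 + 2^(k+1) * a := by positivity
    have hP : (20:ℝ) < 2^k * a := by
      have h1 : (2:ℝ)^K1 ≤ 2^k := pow_le_pow_right₀ one_le_two (le_trans (le_max_right _ _) hk)
      have h2 : (0:ℝ) < 2^K1 := by positivity
      nlinarith
    have step1 : T k ω / (2 + 2^(k+1)*a)
        ≤ ∑ j ∈ Finset.Ioc (2^k) (2^(k+1)), E j ω / (2 + j * a) := by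
      have hTval : T k ω = ∑ j ∈ Finset.Ioc (2^k) (2^(k+1)), E j ω := by simp [hTdef]
      rw [hTval, Finset.sum_div]
      apply Finset.sum_le_sum
      intro j hj
      have hj2 : j ≤ 2^(k+1) := (Finset.mem_Ioc.1 hj).2
      have hjr : (j:ℝ) ≤ 2^(k+1) := by
        have := (Nat.cast_le (α := ℝ)).2 hj2
        push_cast at this
        linarith
      have hja : (j:ℝ) * a ≤ 2^(k+1) * a := mul_le_mul_of_nonneg_right hjr ha.le
      gcongr <;> first
        | exact (hω j).le
        | positivity
        | linarith
    have step2 : 5/7 * (1/(2*a)) ≤ T k ω / (2 + 2^(k+1)*a) := by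
      have h2a : (0:ℝ) < 2*a := by linarith
      have hre : (5:ℝ)/7 * (1/(2*a)) = (5/7) / (2*a) := by ring
      rw [hre, div_le_div_iff₀ h2a hD]
      have hpow : (2:ℝ)^(k+1) = 2 * 2^k := by rw [pow_succ]; ring
      rw [hpow]
      nlinarith [mul_le_mul_of_nonneg_right hTk.le h2a.le]
    exact le_trans step2 step1
  refine ⟨max 2 (2^(40*(K+1))), le_max_left _ _, fun i hi => ?_⟩
  have hi2 : 2 ≤ i := le_trans (le_max_left _ _) hi
  have hi0 : i ≠ 0 := by omega
  set m := Nat.log 2 i with hmdef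
  have hmlarge : 40*(K+1) ≤ m := by
    have h1 : 2^(40*(K+1)) ≤ i := le_trans (le_max_right _ _) hi
    exact (Nat.le_log_iff_pow_le one_lt_two hi0).2 h1
  have hKm : K ≤ m := by omega
  have h2mi : 2^m ≤ i := Nat.pow_log_le_self 2 hi0
  have him : i < 2^(m+1) := Nat.lt_pow_succ_log_self one_lt_two i
  have hsubset : Finset.Ioc (2^K) (2^m) ⊆ Finset.Icc 1 i := by
    intro j hj
    rw [Finset.mem_Ioc] at hj
    rw [Finset.mem_Icc]
    have h1 : 1 ≤ 2^K := Nat.one_le_two_pow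
    exact ⟨by omega, le_trans hj.2 h2mi⟩
  have hchain1 : ∑ j ∈ Finset.Ioc (2^K) (2^m), E j ω / (2 + j * a)
      ≤ ∑ j ∈ Finset.Icc 1 i, E j ω / (2 + j * a) := by
    apply Finset.sum_le_sum_of_subset_of_nonneg hsubset
    intro j _ _
    apply div_nonneg (hω j).le
    positivity
  have hchain2 : (((m:ℝ) - K) * (5/7 * (1/(2*a))))
      ≤ ∑ j ∈ Finset.Ioc (2^K) (2^m), E j ω / (2 + j * a) := by
    rw [← sum_pow_blocks (fun j => E j ω / (2 + j * a)) hKm]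
    calc ((m:ℝ) - K) * (5/7*(1/(2*a)))
        = ∑ _k ∈ Finset.Ico K m, (5/7*(1/(2*a))) := by
          rw [Finset.sum_const, Nat.card_Ico, nsmul_eq_mul, Nat.cast_sub hKm]
      _ ≤ ∑ k ∈ Finset.Ico K m, ∑ j ∈ Finset.Ioc (2^k) (2^(k+1)), E j ω / (2 + j * a) :=
          Finset.sum_le_sum fun k hk => hblock k (Finset.mem_Ico.1 hk).1
  have hlog : Real.log i ≤ ((m:ℝ)+1) * Real.log 2 := by
    have h1 : (i:ℝ) ≤ (2:ℝ)^(m+1) := by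
      have h2 := (Nat.cast_le (α := ℝ)).2 him.le
      push_cast at h2
      linarith
    calc Real.log i ≤ Real.log ((2:ℝ)^(m+1)) :=
          Real.log_le_log (by exact_mod_cast Nat.pos_of_ne_zero hi0) h1
      _ = ((m:ℝ)+1) * Real.log 2 := by rw [Real.log_pow]; push_cast; ring
  have hfinal : ((m:ℝ)+1) * Real.log 2 ≤ ((m:ℝ) - K) * (5/7) := by
    have hl := Real.log_two_lt_d9
    have hmr : (40:ℝ)*((K:ℝ)+1) ≤ m := by exact_mod_cast hmlarge
    have hK0' : (0:ℝ) ≤ K := Nat.cast_nonneg K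
    have hl0 : (0:ℝ) ≤ Real.log 2 := Real.log_nonneg one_le_two
    linarith [mul_le_mul_of_nonneg_left hl.le (show (0:ℝ) ≤ (m:ℝ)+1 by positivity)]
  have h2a : (0:ℝ) < 1/(2*a) := by positivity
  calc (1/(2*a)) * Real.log i ≤ (1/(2*a)) * (((m:ℝ)+1) * Real.log 2) :=
        mul_le_mul_of_nonneg_left hlog h2a.le
    _ ≤ (1/(2*a)) * (((m:ℝ)-K) * (5/7)) := mul_le_mul_of_nonneg_left hfinal h2a.le
    _ = ((m:ℝ)-K) * (5/7 * (1/(2*a))) := by ring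
    _ ≤ _ := le_trans hchain2 hchain1
end

section
/- Let (Θ_i)_{i≥1} be i.i.d. nonnegative random variables with P(Θ_1 > 0) > 0, and let (λ_i)_{i≥1} be positive reals with limsup_i λ_i < ∞ and liminf_{d→∞} (1/(√d·log d))·Σ_{i=1}^d λ_i = ∞. Set U_i = λ_i Θ_i. Then almost surely liminf_{d→∞} (1/(√d·log d))·Σ_{i=1}^d min(U_i, 1/2) = ∞. -/
open MeasureTheory ProbabilityTheory Filter Real




lemma aux_mgf_le {Ω : Type*} [MeasurableSpace Ω] {μ : Measure Ω} [IsProbabilityMeasure μ]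
    {W : Ω → ℝ} (hW : Measurable W) {c t : ℝ} (hc : 0 ≤ c)
    (hbd : ∀ᵐ ω ∂μ, |W ω| ≤ c) (hmean : μ[W] = 0) (ht : |t| * c ≤ 1) :
    mgf W μ t ≤ exp (t ^ 2 * c ^ 2) := by
  have hWint : Integrable W μ := by
    refine (integrable_const c).mono' hW.aestronglyMeasurable ?_
    simpa using hbd
  have hW2int : Integrable (fun ω => W ω ^ 2) μ := by
    refine (integrable_const (c ^ 2)).mono' (hW.pow_const 2).aestronglyMeasurable ?_
    filter_upwards [hbd] with ω h
    rw [Real.norm_eq_abs, abs_pow]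
    exact pow_le_pow_left₀ (abs_nonneg _) h 2
  have hptw : ∀ᵐ ω ∂μ, exp (t * W ω) ≤ 1 + t * W ω + (3/4) * (t * W ω) ^ 2 := by
    filter_upwards [hbd] with ω h
    have hx : |t * W ω| ≤ 1 := by
      rw [abs_mul]
      calc |t| * |W ω| ≤ |t| * c := by gcongr
        _ ≤ 1 := ht
    have := Real.exp_bound hx (n := 2) (by norm_num)
    have h2 : ∑ i ∈ Finset.range 2, (t * W ω) ^ i / (Nat.factorial i : ℝ)
        = 1 + t * W ω := by
      simp [Finset.sum_range_succ]
    rw [h2] at this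
    have h3 := (abs_le.mp this).2
    rw [sq_abs] at h3
    norm_num [Nat.factorial] at h3
    linarith
  have hexpint : Integrable (fun ω => exp (t * W ω)) μ := by
    refine (integrable_const (exp (|t| * c))).mono'
      ((hW.const_mul t).exp).aestronglyMeasurable ?_
    filter_upwards [hbd] with ω h
    rw [Real.norm_eq_abs, abs_of_pos (exp_pos _), Real.exp_le_exp]
    calc t * W ω ≤ |t * W ω| := le_abs_self _
      _ = |t| * |W ω| := abs_mul _ _
      _ ≤ |t| * c := by gcongr
  have hint2 : Integrable (fun ω => 1 + t * W ω + (3/4) * (t * W ω) ^ 2) μ := by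
    apply Integrable.add
    · exact (integrable_const 1).add (hWint.const_mul t)
    · have : (fun ω => (3/4 : ℝ) * (t * W ω) ^ 2)
          = fun ω => ((3/4) * t ^ 2) * W ω ^ 2 := by ext ω; ring
      rw [this]; exact hW2int.const_mul _
  have h1 : mgf W μ t ≤ ∫ ω, (1 + t * W ω + (3/4) * (t * W ω) ^ 2) ∂μ :=
    integral_mono_ae hexpint hint2 hptw
  have h2 : ∫ ω, (1 + t * W ω + (3/4) * (t * W ω) ^ 2) ∂μ
      = 1 + (3/4) * t ^ 2 * ∫ ω, W ω ^ 2 ∂μ := by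
    have hA : Integrable (fun ω => 1 + t * W ω) μ :=
      (integrable_const 1).add (hWint.const_mul t)
    have hB : Integrable (fun ω => ((3/4) * t ^ 2) * W ω ^ 2) μ := hW2int.const_mul _
    have heq : ∫ ω, (1 + t * W ω + (3/4) * (t * W ω) ^ 2) ∂μ
        = ∫ ω, ((1 + t * W ω) + ((3/4) * t ^ 2) * W ω ^ 2) ∂μ := by
      congr 1; ext ω; ring
    rw [heq, integral_add hA hB, integral_add (integrable_const 1) (hWint.const_mul t),
      integral_const, integral_const_mul, integral_const_mul, hmean]
    simp
  have h3 : ∫ ω, W ω ^ 2 ∂μ ≤ c ^ 2 := by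
    calc ∫ ω, W ω ^ 2 ∂μ ≤ ∫ _, c ^ 2 ∂μ := by
          refine integral_mono_ae hW2int (integrable_const _) ?_
          filter_upwards [hbd] with ω h
          rw [← sq_abs]; exact pow_le_pow_left₀ (abs_nonneg _) h 2
      _ = c ^ 2 := by simp
  calc mgf W μ t ≤ 1 + (3/4) * t ^ 2 * ∫ ω, W ω ^ 2 ∂μ := h1.trans_eq h2
    _ ≤ 1 + t ^ 2 * c ^ 2 := by nlinarith [sq_nonneg t, sq_nonneg c]
    _ ≤ exp (t ^ 2 * c ^ 2) := by
        have := Real.add_one_le_exp (t ^ 2 * c ^ 2); linarith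

lemma aux_arith {dR M L S : ℝ} (hd : S * S = dR) (hS : 0 < S) (hM : 1 ≤ M) (hL : 0 ≤ L) :
    -(L / (2 * S * M ^ 2)) * (S * L) + dR * ((L / (2 * S * M ^ 2)) ^ 2 * (M / 2) ^ 2)
      ≤ -L ^ 2 / (4 * M ^ 2) := by
  have hM0 : (0:ℝ) < M := lt_of_lt_of_le one_pos hM
  have h1 : -(L / (2 * S * M ^ 2)) * (S * L) + dR * ((L / (2 * S * M ^ 2)) ^ 2 * (M / 2) ^ 2)
      = -(7 * L ^ 2) / (16 * M ^ 2) := by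
    rw [← hd]
    field_simp
    ring
  rw [h1]
  rw [div_le_div_iff₀ (by positivity) (by positivity)]
  nlinarith [sq_nonneg L, sq_nonneg M, mul_nonneg (sq_nonneg L) (sq_nonneg M)]

theorem truncated_sums_grow_of_iid_scaled
    {Ω : Type*} [MeasurableSpace Ω] (μ : Measure Ω) [IsProbabilityMeasure μ]
    (Θ : ℕ → Ω → ℝ)
    (hmeas : ∀ i, Measurable (Θ i))
    (hindep : iIndepFun Θ μ)
    (hident : ∀ i, IdentDistrib (Θ i) (Θ 1) μ μ)
    (hnn : ∀ i, ∀ᵐ ω ∂μ, 0 ≤ Θ i ω)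
    (hpos : 0 < μ {ω | 0 < Θ 1 ω})
    (lam : ℕ → ℝ) (hlampos : ∀ i, 0 < lam i)
    (hbdd : IsBoundedUnder (· ≤ ·) atTop lam)
    (hgrow : Tendsto (fun d : ℕ =>
        (1 / (Real.sqrt d * Real.log d)) * ∑ i ∈ Finset.Icc 1 d, lam i)
      atTop atTop) :
    ∀ᵐ ω ∂μ, Tendsto (fun d : ℕ =>
        (1 / (Real.sqrt d * Real.log d)) *
          ∑ i ∈ Finset.Icc 1 d, min (lam i * Θ i ω) (1/2))
      atTop atTop := by
  classical
  -- a uniform bound on lam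
  obtain ⟨M, hM1, hMlam⟩ : ∃ M : ℝ, 1 ≤ M ∧ ∀ i, lam i ≤ M := by
    obtain ⟨b, hb⟩ := hbdd
    rw [eventually_map, eventually_atTop] at hb
    obtain ⟨N, hN⟩ := hb
    refine ⟨max 1 (max b ((Finset.range (N+1)).sup' (by simp) lam)), le_max_left _ _, ?_⟩
    intro i
    rcases lt_or_ge i (N+1) with h | h
    · exact le_trans (Finset.le_sup' lam (Finset.mem_range.mpr h))
        (le_trans (le_max_right _ _) (le_max_right _ _))
    · exact le_trans (hN i (by omega)) (le_trans (le_max_left _ _) (le_max_right _ _))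
  have hM0 : (0:ℝ) < M := lt_of_lt_of_le one_pos hM1
  -- truncated variables
  set Y : ℕ → Ω → ℝ := fun i ω => min (Θ i ω) (1/2) with hY
  have hYmeas : ∀ i, Measurable (Y i) := fun i => (hmeas i).min measurable_const
  have hYbd : ∀ i, ∀ᵐ ω ∂μ, 0 ≤ Y i ω ∧ Y i ω ≤ 1/2 := by
    intro i
    filter_upwards [hnn i] with ω h
    exact ⟨le_min h (by norm_num), min_le_right _ _⟩
  have hYint : ∀ i, Integrable (Y i) μ := by
    intro i
    refine (integrable_const (1/2 : ℝ)).mono' (hYmeas i).aestronglyMeasurable ?_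
    filter_upwards [hYbd i] with ω h
    rw [Real.norm_eq_abs, abs_le]
    constructor <;> linarith [h.1, h.2]
  set m : ℝ := ∫ ω, Y 1 ω ∂μ with hm
  have hYident : ∀ i, IdentDistrib (Y i) (Y 1) μ μ :=
    fun i => (hident i).comp (measurable_id.min measurable_const)
  have hEY : ∀ i, ∫ ω, Y i ω ∂μ = m := fun i => (hYident i).integral_eq
  have hm_pos : 0 < m := by
    rw [hm]
    refine (integral_pos_iff_support_of_nonneg_ae ?_ (hYint 1)).mpr ?_
    · filter_upwards [hnn 1] with ω h
      exact le_min h (by norm_num)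
    · refine lt_of_lt_of_le hpos (measure_mono ?_)
      intro ω hω
      simp only [Set.mem_setOf_eq] at hω
      simp only [Function.mem_support]
      exact ne_of_gt (lt_min hω (by norm_num))
  have hm_le : m ≤ 1/2 := by
    rw [hm]
    calc ∫ ω, Y 1 ω ∂μ ≤ ∫ _, (1/2:ℝ) ∂μ :=
          integral_mono (hYint 1) (integrable_const _) (fun ω => min_le_right _ _)
      _ = 1/2 := by simp
  -- centered weighted variables
  set W : ℕ → Ω → ℝ := fun i ω => lam i * (m - Y i ω) with hWdef
  have hWmeas : ∀ i, Measurable (W i) :=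
    fun i => (measurable_const.sub (hYmeas i)).const_mul _
  have hWbd : ∀ i, ∀ᵐ ω ∂μ, |W i ω| ≤ M/2 := by
    intro i
    filter_upwards [hYbd i] with ω h
    rw [hWdef, abs_mul, abs_of_pos (hlampos i)]
    have h1 : |m - Y i ω| ≤ 1/2 := by
      rw [abs_le]; constructor <;> linarith [h.1, h.2, hm_pos, hm_le]
    calc lam i * |m - Y i ω| ≤ M * (1/2) := by
          apply mul_le_mul (hMlam i) h1 (abs_nonneg _) hM0.le
      _ = M/2 := by ring
  have hWmean : ∀ i, ∫ ω, W i ω ∂μ = 0 := by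
    intro i
    rw [hWdef]
    simp only
    rw [integral_const_mul, integral_sub (integrable_const m) (hYint i),
      integral_const, hEY i]
    simp
  have hWindep : iIndepFun W μ := by
    have : W = fun i => (fun x : ℝ => lam i * (m - min x (1/2))) ∘ Θ i := rfl
    rw [this]
    exact hindep.comp _ (fun i =>
      (measurable_const.sub (measurable_id.min measurable_const)).const_mul _)
  -- events
  set s : ℕ → ℝ := fun d => Real.sqrt d * Real.log d with hsdef
  set A : ℕ → Set Ω := fun d => {ω | s d ≤ ∑ i ∈ Finset.Icc 1 d, W i ω} with hA
  have key : ∀ d : ℕ, 2 ≤ d →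
      (μ (A d)).toReal ≤ exp (-Real.log d ^ 2 / (4 * M ^ 2)) := by
    intro d hd
    have hd1 : (1:ℝ) < d := by exact_mod_cast Nat.lt_of_lt_of_le one_lt_two hd
    have hdpos : (0:ℝ) < d := by linarith
    have hsq : 0 < Real.sqrt d := Real.sqrt_pos.mpr hdpos
    have hlog : 0 < Real.log d := Real.log_pos hd1
    have hss : Real.sqrt d * Real.sqrt d = (d:ℝ) := Real.mul_self_sqrt hdpos.le
    have hlogle : Real.log d ≤ 2 * Real.sqrt d := by
      have h1 : Real.log (Real.sqrt d) = Real.log d / 2 := Real.log_sqrt hdpos.le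
      have h2 : Real.log (Real.sqrt d) ≤ Real.sqrt d - 1 := Real.log_le_sub_one_of_pos hsq
      linarith
    set t : ℝ := Real.log d / (2 * Real.sqrt d * M ^ 2) with htdef
    have ht0 : 0 ≤ t := by positivity
    have htM : |t| * (M/2) ≤ 1 := by
      rw [abs_of_nonneg ht0, htdef, div_mul_eq_mul_div, div_le_one (by positivity)]
      nlinarith [mul_le_mul_of_nonneg_right hlogle (le_of_lt (by linarith : (0:ℝ) < M/2)),
        mul_le_mul_of_nonneg_left hM1 (by positivity : (0:ℝ) ≤ Real.sqrt d * M)]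
    have hsumbd : ∀ᵐ ω ∂μ, ∑ i ∈ Finset.Icc 1 d, W i ω ≤ d * (M/2) := by
      filter_upwards [ae_all_iff.2 hWbd] with ω h
      calc ∑ i ∈ Finset.Icc 1 d, W i ω ≤ ∑ _i ∈ Finset.Icc 1 d, (M/2) :=
            Finset.sum_le_sum (fun i _ => (abs_le.mp (h i)).2)
        _ = d * (M/2) := by
            rw [Finset.sum_const, Nat.card_Icc, nsmul_eq_mul]
            norm_num
    have hXmeas : Measurable (fun ω => ∑ i ∈ Finset.Icc 1 d, W i ω) :=
      Finset.measurable_sum _ (fun i _ => hWmeas i)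
    have hint : Integrable (fun ω => exp (t * ∑ i ∈ Finset.Icc 1 d, W i ω)) μ := by
      refine (integrable_const (exp (t * (d * (M/2))))).mono'
        ((hXmeas.const_mul t).exp).aestronglyMeasurable ?_
      filter_upwards [hsumbd] with ω h
      rw [Real.norm_eq_abs, abs_of_pos (Real.exp_pos _), Real.exp_le_exp]
      exact mul_le_mul_of_nonneg_left h ht0
    have hcher := measure_ge_le_exp_mul_mgf (μ := μ)
      (X := fun ω => ∑ i ∈ Finset.Icc 1 d, W i ω) (s d) ht0 hint
    have hmgfsum : mgf (fun ω => ∑ i ∈ Finset.Icc 1 d, W i ω) μ t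
        = ∏ i ∈ Finset.Icc 1 d, mgf (W i) μ t := by
      have hXeq : (fun ω => ∑ i ∈ Finset.Icc 1 d, W i ω) = (∑ i ∈ Finset.Icc 1 d, W i) := by
        ext ω; rw [Finset.sum_apply]
      rw [hXeq]
      exact hWindep.mgf_sum hWmeas _
    have hmgfprod : ∏ i ∈ Finset.Icc 1 d, mgf (W i) μ t ≤ exp (d * (t ^ 2 * (M/2) ^ 2)) := by
      calc ∏ i ∈ Finset.Icc 1 d, mgf (W i) μ t
          ≤ ∏ _i ∈ Finset.Icc 1 d, exp (t ^ 2 * (M/2) ^ 2) := by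
            refine Finset.prod_le_prod (fun i _ => mgf_nonneg) (fun i _ => ?_)
            exact aux_mgf_le (hWmeas i) (by positivity) (hWbd i) (hWmean i) htM
        _ = exp (d * (t ^ 2 * (M/2) ^ 2)) := by
            rw [Finset.prod_const, Nat.card_Icc, ← Real.exp_nat_mul]
            norm_num
    calc (μ (A d)).toReal
        ≤ exp (-t * s d) * mgf (fun ω => ∑ i ∈ Finset.Icc 1 d, W i ω) μ t := by
          rw [hA]; exact hcher
      _ ≤ exp (-t * s d) * exp (d * (t ^ 2 * (M/2) ^ 2)) := by
          rw [hmgfsum]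
          exact mul_le_mul_of_nonneg_left hmgfprod (Real.exp_pos _).le
      _ = exp (-t * s d + d * (t ^ 2 * (M/2) ^ 2)) := (Real.exp_add _ _).symm
      _ ≤ exp (-Real.log d ^ 2 / (4 * M ^ 2)) := by
          apply Real.exp_le_exp.mpr
          rw [htdef]
          simp only [hsdef]
          exact aux_arith hss hsq hM1 hlog.le
  have hfin : (∑' d : ℕ, μ (A (d + 2))) ≠ ⊤ := by
    have hsumm : Summable (fun n : ℕ => Real.exp (-Real.log ((n + 2 : ℕ):ℝ) ^ 2 / (4 * M ^ 2))) := by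
      have hs2 : Summable (fun n : ℕ => 1 / ((n:ℝ) + 2) ^ 2) := by
        have h0 : Summable (fun n : ℕ => 1 / ((n:ℝ)) ^ 2) :=
          Real.summable_one_div_nat_pow.mpr one_lt_two
        have h1 := (summable_nat_add_iff 2).mpr h0
        refine h1.congr (fun n => ?_)
        push_cast
        ring
      refine summable_of_isBigO_nat hs2 (Asymptotics.IsBigO.of_bound 1 ?_)
      have hlogtend : Tendsto (fun n : ℕ => Real.log ((n:ℝ) + 2)) atTop atTop :=
        Real.tendsto_log_atTop.comp
          (tendsto_atTop_add_const_right _ 2 tendsto_natCast_atTop_atTop)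
      filter_upwards [hlogtend.eventually_ge_atTop (8 * M ^ 2)] with n hn
      have hx : (0:ℝ) < (n:ℝ) + 2 := by positivity
      have hL0 : 0 ≤ Real.log ((n:ℝ) + 2) := le_trans (by positivity) hn
      have hcast : ((n + 2 : ℕ):ℝ) = (n:ℝ) + 2 := by push_cast; ring
      have h1 : Real.exp (-Real.log ((n:ℝ) + 2) ^ 2 / (4 * M ^ 2))
          ≤ Real.exp (-(2 * Real.log ((n:ℝ) + 2))) := by
        apply Real.exp_le_exp.mpr
        have h2 : 2 * Real.log ((n:ℝ) + 2) ≤ Real.log ((n:ℝ) + 2) ^ 2 / (4 * M ^ 2) := by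
          rw [le_div_iff₀ (by positivity)]
          nlinarith
        rw [neg_div]
        exact neg_le_neg h2
      have h3 : Real.exp (-(2 * Real.log ((n:ℝ) + 2))) = 1 / ((n:ℝ) + 2) ^ 2 := by
        rw [Real.exp_neg,
          show (2:ℝ) * Real.log ((n:ℝ) + 2) = Real.log (((n:ℝ) + 2) ^ 2) by
            rw [Real.log_pow]; norm_num,
          Real.exp_log (by positivity), one_div]
      rw [one_mul, Real.norm_eq_abs, Real.norm_eq_abs, abs_of_pos (Real.exp_pos _),
        abs_of_pos (by positivity), hcast]
      rw [← h3]
      exact h1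
    have hle : ∀ n : ℕ, μ (A (n + 2)) ≤
        ENNReal.ofReal (Real.exp (-Real.log ((n + 2 : ℕ):ℝ) ^ 2 / (4 * M ^ 2))) := fun n =>
      (ENNReal.le_ofReal_iff_toReal_le (measure_ne_top μ _) (Real.exp_pos _).le).mpr
        (key (n + 2) (by omega))
    refine ne_of_lt (lt_of_le_of_lt (ENNReal.tsum_le_tsum hle) ?_)
    rw [← ENNReal.ofReal_tsum_of_nonneg (fun n => (Real.exp_pos _).le) hsumm]
    exact ENNReal.ofReal_lt_top
  have hBC : ∀ᵐ ω ∂μ, ∀ᶠ d in atTop, ω ∉ A d := by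
    filter_upwards [ae_eventually_notMem hfin] with ω hω
    rw [eventually_atTop] at hω ⊢
    obtain ⟨N, hN⟩ := hω
    exact ⟨N + 2, fun d hd => by
      have := hN (d - 2) (by omega)
      rwa [Nat.sub_add_cancel (by omega)] at this⟩
  -- deterministic conclusion
  filter_upwards [hBC, ae_all_iff.2 hnn] with ω hω hnnω
  have hlow : Tendsto (fun d : ℕ =>
      (1/M) * (m * ((1 / (s d)) * ∑ i ∈ Finset.Icc 1 d, lam i) - 1)) atTop atTop := by
    apply Tendsto.const_mul_atTop (by positivity : (0:ℝ) < 1/M)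
    apply tendsto_atTop_add_const_right
    exact hgrow.const_mul_atTop hm_pos
  apply tendsto_atTop_mono' atTop ?_ hlow
  filter_upwards [hω, eventually_ge_atTop 2] with d hdA hd2
  have hd1 : (1:ℝ) < d := by exact_mod_cast Nat.lt_of_lt_of_le one_lt_two hd2
  have hsq : 0 < Real.sqrt d := Real.sqrt_pos.mpr (by linarith)
  have hlog : 0 < Real.log d := Real.log_pos hd1
  have hspos : 0 < s d := mul_pos hsq hlog
  set a := ∑ i ∈ Finset.Icc 1 d, lam i with ha
  set b := ∑ i ∈ Finset.Icc 1 d, lam i * Y i ω with hb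
  set c := ∑ i ∈ Finset.Icc 1 d, min (lam i * Θ i ω) (1/2) with hc
  have hnotA : ∑ i ∈ Finset.Icc 1 d, W i ω < s d := by
    by_contra h
    exact hdA (by simpa [hA] using not_lt.mp h)
  have hsumW : ∑ i ∈ Finset.Icc 1 d, W i ω = m * a - b := by
    rw [ha, hb, Finset.mul_sum, ← Finset.sum_sub_distrib]
    apply Finset.sum_congr rfl
    intro i _
    rw [hWdef]
    ring
  have h1 : m * a - s d ≤ b := by rw [hsumW] at hnotA; linarith
  have hsum_min : (1/M) * b ≤ c := by
    rw [hb, hc, Finset.mul_sum]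
    apply Finset.sum_le_sum
    intro i _
    have hθ : 0 ≤ Θ i ω := hnnω i
    have hl : 0 < lam i := hlampos i
    have h0Y : 0 ≤ Y i ω := le_min hθ (by norm_num)
    have heq : (1/M) * (lam i * Y i ω) = (lam i / M) * Y i ω := by ring
    rw [heq]
    rcases le_or_gt (lam i * Θ i ω) (1/2) with hcc | hcc
    · rw [min_eq_left hcc]
      calc (lam i / M) * Y i ω ≤ (lam i / M) * Θ i ω := by
            apply mul_le_mul_of_nonneg_left (min_le_left _ _) (by positivity)
        _ ≤ lam i * Θ i ω := by
            apply mul_le_mul_of_nonneg_right (div_le_self hl.le hM1) hθ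
    · rw [min_eq_right hcc.le]
      calc (lam i / M) * Y i ω ≤ (lam i / M) * (1/2) := by
            apply mul_le_mul_of_nonneg_left (min_le_right _ _) (by positivity)
        _ ≤ 1 * (1/2) := by
            apply mul_le_mul_of_nonneg_right _ (by norm_num)
            exact div_le_one_of_le₀ (hMlam i) hM0.le
        _ = 1/2 := one_mul _
  have hkey : (1/M) * (m * ((1 / (s d)) * a) - 1) = (1 / (s d)) * ((1/M) * (m * a - s d)) := by
    have h2 : (1 / (s d)) * ((1/M) * (m * a - s d)) = (1/M) * (m * ((1 / (s d)) * a) - (s d)/(s d)) := by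
      ring
    rw [h2, div_self hspos.ne']
  calc (1/M) * (m * ((1 / (s d)) * a) - 1)
      = (1 / (s d)) * ((1/M) * (m * a - s d)) := hkey
    _ ≤ (1 / (s d)) * ((1/M) * b) := by
        apply mul_le_mul_of_nonneg_left _ (by positivity)
        apply mul_le_mul_of_nonneg_left h1 (by positivity)
    _ ≤ (1 / (s d)) * c := by
        apply mul_le_mul_of_nonneg_left hsum_min (by positivity)
end

section
/- Fix a, a' > 0 with a ≠ a'. Let (V_i)_{i≥1} be i.i.d. exponential random variables with rate 2 and define V_{a,i} = 2V_i/(2+ia), V_{a',i} = 2V_i/(2+ia'). Then almost surely Σ_{i=1}^d |V_{a,i} - V_{a',i}| = O(|a - a'|·log d) as d → ∞; more precisely, almost surely limsup_{d→∞} (1/log d)·Σ_{i=1}^d |V_{a,i} - V_{a',i}| ≤ |a-a'|/(a·a'). -/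
open MeasureTheory ProbabilityTheory Filter Real
open scoped Topology

section Aux

lemma log_nat_nonneg (d : ℕ) : 0 ≤ Real.log d := by
  rcases Nat.eq_zero_or_pos d with h | h
  · simp [h]
  · exact Real.log_nonneg (by exact_mod_cast h)

lemma harmonicSum_le_one_add_log : ∀ d : ℕ, 1 ≤ d →
    (∑ j ∈ Finset.range d, (1:ℝ)/((j:ℝ)+1)) ≤ 1 + Real.log d := by
  intro d hd
  induction d with
  | zero => omega
  | succ n ih =>
    rcases Nat.eq_or_lt_of_le hd with h | h
    · have hn : n = 0 := by omega
      subst hn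
      simp
    · have hn : 1 ≤ n := by omega
      have hn1 : (1:ℝ) ≤ (n:ℝ) := by exact_mod_cast hn
      have hx : (0:ℝ) < (n:ℝ)/((n:ℝ)+1) := by positivity
      have h1 := Real.log_le_sub_one_of_pos hx
      have hlogdiv : Real.log ((n:ℝ)/((n:ℝ)+1)) = Real.log n - Real.log ((n:ℝ)+1) := by
        rw [Real.log_div (by linarith) (by linarith)]
      have h2 : (n:ℝ)/((n:ℝ)+1) - 1 = -(1/((n:ℝ)+1)) := by field_simp; ring
      have key : (1:ℝ)/((n:ℝ)+1) ≤ Real.log ((n:ℝ)+1) - Real.log n := by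
        rw [hlogdiv, h2] at h1; linarith
      have hs := Finset.sum_range_succ (fun j => (1:ℝ)/((j:ℝ)+1)) n
      have hcast : ((n+1 : ℕ):ℝ) = (n:ℝ)+1 := by push_cast; ring
      rw [hs, hcast]
      have := ih hn
      linarith

lemma abel_bound (v : ℕ → ℝ) (hv : ∀ i, 0 ≤ v i) (c : ℝ) (N : ℕ) (hN : 1 ≤ N)
    (hs : ∀ n, N ≤ n → (∑ j ∈ Finset.range n, v (j+1)) ≤ c * n) :
    ∀ d, N ≤ d → (∑ j ∈ Finset.range d, v (j+1)/((j:ℝ)+1)) ≤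
      (∑ j ∈ Finset.range N, v (j+1)/((j:ℝ)+1)) +
      (∑ j ∈ Finset.range d, v (j+1))/(d:ℝ) +
      c * ∑ j ∈ Finset.Ico N d, (1:ℝ)/((j:ℝ)+1) := by
  intro d hd
  induction d, hd using Nat.le_induction with
  | base =>
    have h0 : (0:ℝ) ≤ (∑ j ∈ Finset.range N, v (j+1))/(N:ℝ) :=
      div_nonneg (Finset.sum_nonneg fun j _ => hv _) (Nat.cast_nonneg N)
    simp only [Finset.Ico_self, Finset.sum_empty, mul_zero, add_zero]
    linarith
  | succ d hd ih =>
    have hd1 : 1 ≤ d := le_trans hN hd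
    have hd0 : (0:ℝ) < (d:ℝ) := by exact_mod_cast hd1
    have hdd1 : (0:ℝ) < (d:ℝ)+1 := by linarith
    have hsd := hs d hd
    set sd := ∑ j ∈ Finset.range d, v (j+1) with hsdd
    set sd1 := ∑ j ∈ Finset.range (d+1), v (j+1) with hsd1
    have hvd : v (d+1) = sd1 - sd := by
      rw [hsd1, Finset.sum_range_succ]; ring
    have hstep : (∑ j ∈ Finset.range (d+1), v (j+1)/((j:ℝ)+1)) =
        (∑ j ∈ Finset.range d, v (j+1)/((j:ℝ)+1)) + v (d+1)/((d:ℝ)+1) :=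
      Finset.sum_range_succ _ d
    have hIco : (∑ j ∈ Finset.Ico N (d+1), (1:ℝ)/((j:ℝ)+1)) =
        (∑ j ∈ Finset.Ico N d, (1:ℝ)/((j:ℝ)+1)) + 1/((d:ℝ)+1) :=
      Finset.sum_Ico_succ_top hd _
    have key : sd / (d:ℝ) ≤ sd/((d:ℝ)+1) + c/((d:ℝ)+1) := by
      rw [← add_div, div_le_div_iff₀ hd0 hdd1]
      nlinarith [hsd]
    have hdiv : sd/((d:ℝ)+1) + (sd1 - sd)/((d:ℝ)+1) = sd1/((d:ℝ)+1) := by ring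
    have hcast : ((d+1:ℕ):ℝ) = (d:ℝ)+1 := by push_cast; ring
    rw [hstep, hIco, hcast, hvd]
    have hexpand : c * ((∑ j ∈ Finset.Ico N d, (1:ℝ)/((j:ℝ)+1)) + 1/((d:ℝ)+1)) =
        c * (∑ j ∈ Finset.Ico N d, (1:ℝ)/((j:ℝ)+1)) + c/((d:ℝ)+1) := by ring
    rw [hexpand]
    linarith [ih, key, hdiv]

lemma det_limsup (v : ℕ → ℝ) (hv : ∀ i, 0 ≤ v i)
    (h : Tendsto (fun n : ℕ => ((n:ℝ))⁻¹ * ∑ j ∈ Finset.range n, v (j+1)) atTop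
      (𝓝 (1/2))) :
    ∀ b : ℝ, 1/2 < b → ∀ᶠ d : ℕ in atTop,
      (1/Real.log d) * ∑ j ∈ Finset.range d, v (j+1)/((j:ℝ)+1) ≤ b := by
  intro b hb
  set c := (1/2 + b)/2 with hc
  have hc1 : 1/2 < c := by rw [hc]; linarith
  have hc2 : c < b := by rw [hc]; linarith
  have hc0 : 0 < c := by linarith
  have hev : ∀ᶠ n : ℕ in atTop, ((n:ℝ))⁻¹ * ∑ j ∈ Finset.range n, v (j+1) ≤ c :=
    ((tendsto_order.1 h).2 c hc1).mono fun n hn => hn.le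
  obtain ⟨N0, hN0⟩ := eventually_atTop.1 hev
  set N := max N0 1 with hNdef
  have hN1 : 1 ≤ N := le_max_right _ _
  have hs : ∀ n, N ≤ n → (∑ j ∈ Finset.range n, v (j+1)) ≤ c * n := by
    intro n hn
    have h1 : 1 ≤ n := le_trans hN1 hn
    have hn0 : (0:ℝ) < (n:ℝ) := by exact_mod_cast h1
    have := hN0 n (le_trans (le_max_left _ _) hn)
    rw [inv_mul_le_iff₀ hn0] at this
    linarith [this]
  set C := ∑ j ∈ Finset.range N, v (j+1)/((j:ℝ)+1) with hCdef
  have hC0 : 0 ≤ C :=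
    Finset.sum_nonneg fun j _ => div_nonneg (hv _) (by positivity)
  have hmain : ∀ d, N ≤ d →
      (∑ j ∈ Finset.range d, v (j+1)/((j:ℝ)+1)) ≤ (C + 2*c) + c * Real.log d := by
    intro d hd
    have hd1 : 1 ≤ d := le_trans hN1 hd
    have hd0 : (0:ℝ) < (d:ℝ) := by exact_mod_cast hd1
    have h1 := abel_bound v hv c N hN1 hs d hd
    have h2 : (∑ j ∈ Finset.range d, v (j+1))/(d:ℝ) ≤ c := by
      rw [div_le_iff₀ hd0]; exact hs d hd
    have h3 : (∑ j ∈ Finset.Ico N d, (1:ℝ)/((j:ℝ)+1)) ≤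
        ∑ j ∈ Finset.range d, (1:ℝ)/((j:ℝ)+1) := by
      apply Finset.sum_le_sum_of_subset_of_nonneg
      · rw [Finset.range_eq_Ico]
        exact Finset.Ico_subset_Ico (Nat.zero_le _) le_rfl
      · intro j _ _; positivity
    have h4 := harmonicSum_le_one_add_log d hd1
    have h5 : c * (∑ j ∈ Finset.Ico N d, (1:ℝ)/((j:ℝ)+1)) ≤ c * (1 + Real.log d) :=
      mul_le_mul_of_nonneg_left (le_trans h3 h4) hc0.le
    nlinarith [h1, h2, h5]
  have hlog : Tendsto (fun d : ℕ => Real.log d) atTop atTop :=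
    Real.tendsto_log_atTop.comp tendsto_natCast_atTop_atTop
  have hbc : (0:ℝ) < b - c := by linarith
  filter_upwards [hlog.eventually_ge_atTop ((C + 2*c)/(b - c)),
    hlog.eventually_ge_atTop 1, eventually_ge_atTop N] with d h1 h2 h3
  have hL : (0:ℝ) < Real.log d := lt_of_lt_of_le one_pos h2
  have hA : C + 2*c ≤ (b - c) * Real.log d := by
    rw [div_le_iff₀ hbc] at h1; linarith [h1]
  have hTd := hmain d h3
  calc (1/Real.log d) * ∑ j ∈ Finset.range d, v (j+1)/((j:ℝ)+1)
      ≤ (1/Real.log d) * ((C + 2*c) + c * Real.log d) :=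
        mul_le_mul_of_nonneg_left hTd (by positivity)
    _ ≤ (1/Real.log d) * ((b - c) * Real.log d + c * Real.log d) := by
        apply mul_le_mul_of_nonneg_left _ (by positivity)
        linarith
    _ = b := by field_simp; ring

end Aux

section ExpRV

variable {Ω : Type*} [MeasurableSpace Ω] {μ : Measure Ω} [IsProbabilityMeasure μ]
variable {X : Ω → ℝ}

lemma IsExpRV.meas_gt (h : IsExpRV μ 2 X) (t : ℝ) : MeasurableSet {ω | X ω > t} :=
  h.1 measurableSet_Ioi

lemma IsExpRV.pos_ae (h : IsExpRV μ 2 X) : ∀ᵐ ω ∂μ, 0 < X ω := by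
  have h0 := h.2 0 le_rfl
  simp only [mul_zero, neg_zero, Real.exp_zero, ENNReal.ofReal_one] at h0
  rw [ae_iff]
  have hset : {ω | ¬ 0 < X ω} = {ω | X ω > 0}ᶜ := by ext ω; simp
  rw [hset, prob_compl_eq_one_sub (h.meas_gt 0), h0, tsub_self]

lemma exp_integral_half : ∫ t in Set.Ioi (0:ℝ), Real.exp (-(2*t)) = 1/2 := by
  have hderiv : ∀ x ∈ Set.Ici (0:ℝ),
      HasDerivAt (fun t : ℝ => -Real.exp (-(2*t))/2) (Real.exp (-(2*x))) x := by
    intro x _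
    have h1 : HasDerivAt (fun t : ℝ => -(2*t)) (-2) x := by
      have := ((hasDerivAt_id x).const_mul (2:ℝ)).neg
      rw [show (-2:ℝ) = -(2*1) by norm_num]
      exact this
    have h2 := (h1.exp).neg.div_const 2
    have h3 : HasDerivAt (fun t : ℝ => -Real.exp (-(2*t))/2) (-(rexp (-(2 * x)) * -2) / 2) x := h2
    convert h3 using 1
    ring
  have hint : IntegrableOn (fun t : ℝ => Real.exp (-(2*t))) (Set.Ioi 0) := by
    have := exp_neg_integrableOn_Ioi 0 (by norm_num : (0:ℝ) < 2)
    simpa [neg_mul] using this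
  have hneg : Tendsto (fun t : ℝ => -(2*t)) atTop atBot := by
    apply tendsto_neg_atBot_iff.2
    exact (tendsto_id.const_mul_atTop two_pos)
  have htend : Tendsto (fun t : ℝ => -Real.exp (-(2*t))/2) atTop (𝓝 0) := by
    have := ((Real.tendsto_exp_atBot.comp hneg).neg).div_const (2:ℝ)
    simpa using this
  rw [integral_Ioi_of_hasDerivAt_of_tendsto' hderiv hint htend]
  norm_num

lemma IsExpRV.lintegral_eq (h : IsExpRV μ 2 X) :
    ∫⁻ ω, ENNReal.ofReal (X ω) ∂μ = ENNReal.ofReal (1/2) := by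
  have hnn : 0 ≤ᵐ[μ] X := h.pos_ae.mono fun ω hω => hω.le
  rw [lintegral_eq_lintegral_meas_lt μ hnn h.1.aemeasurable]
  have hcongr : ∀ᵐ t ∂(volume.restrict (Set.Ioi (0:ℝ))),
      μ {a | t < X a} = ENNReal.ofReal (Real.exp (-(2*t))) := by
    filter_upwards [ae_restrict_mem measurableSet_Ioi] with t ht
    exact h.2 t (le_of_lt ht)
  have hint2 : Integrable (fun t : ℝ => Real.exp (-(2*t))) (volume.restrict (Set.Ioi 0)) := by
    have := exp_neg_integrableOn_Ioi 0 (by norm_num : (0:ℝ) < 2)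
    simpa [neg_mul, IntegrableOn] using this
  have hnn2 : 0 ≤ᵐ[volume.restrict (Set.Ioi (0:ℝ))] fun t : ℝ => Real.exp (-(2*t)) :=
    ae_of_all _ fun t => (Real.exp_pos _).le
  rw [lintegral_congr_ae hcongr, ← ofReal_integral_eq_lintegral_ofReal hint2 hnn2,
    exp_integral_half]

lemma IsExpRV.integrable (h : IsExpRV μ 2 X) : Integrable X μ := by
  have hnn : 0 ≤ᵐ[μ] X := h.pos_ae.mono fun ω hω => hω.le
  refine ⟨h.1.aestronglyMeasurable, ?_⟩
  rw [hasFiniteIntegral_iff_ofReal hnn, h.lintegral_eq]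
  exact ENNReal.ofReal_lt_top

lemma IsExpRV.integral_eq (h : IsExpRV μ 2 X) : ∫ ω, X ω ∂μ = 1/2 := by
  have hnn : 0 ≤ᵐ[μ] X := h.pos_ae.mono fun ω hω => hω.le
  rw [integral_eq_lintegral_of_nonneg_ae hnn h.1.aestronglyMeasurable, h.lintegral_eq,
    ENNReal.toReal_ofReal (by norm_num)]

lemma IsExpRV.meas_Iic (h : IsExpRV μ 2 X) (t : ℝ) :
    μ (X ⁻¹' Set.Iic t) = 1 - ENNReal.ofReal (Real.exp (-(2 * max t 0))) := by
  have hcompl : X ⁻¹' Set.Iic t = {ω | X ω > t}ᶜ := by ext ω; simp [not_lt]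
  rw [hcompl, prob_compl_eq_one_sub (h.meas_gt t)]
  rcases le_or_gt 0 t with ht | ht
  · rw [h.2 t ht, max_eq_left ht]
  · rw [max_eq_right ht.le]
    have h1 : μ {ω | X ω > t} = 1 := by
      have h0 := h.2 0 le_rfl
      simp only [mul_zero, neg_zero, Real.exp_zero, ENNReal.ofReal_one] at h0
      have hsub : {ω | X ω > 0} ⊆ {ω | X ω > t} := fun ω hω => lt_trans ht hω
      have hmono := measure_mono (μ := μ) hsub
      rw [h0] at hmono
      exact le_antisymm (prob_le_one (μ := μ)) hmono
    rw [h1]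
    simp

lemma IsExpRV.identDistrib {Y : Ω → ℝ} (hX : IsExpRV μ 2 X) (hY : IsExpRV μ 2 Y) :
    IdentDistrib X Y μ μ := by
  refine ⟨hX.1.aemeasurable, hY.1.aemeasurable, ?_⟩
  have h1 : IsProbabilityMeasure (μ.map X) := Measure.isProbabilityMeasure_map hX.1.aemeasurable
  have h2 : IsProbabilityMeasure (μ.map Y) := Measure.isProbabilityMeasure_map hY.1.aemeasurable
  refine MeasureTheory.Measure.ext_of_Iic _ _ (fun t => ?_)
  rw [Measure.map_apply hX.1 measurableSet_Iic, Measure.map_apply hY.1 measurableSet_Iic,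
    hX.meas_Iic, hY.meas_Iic]

end ExpRV

theorem coupled_stationary_gap_L1_distance_log_growth
    {Ω : Type*} [MeasurableSpace Ω] (μ : Measure Ω) [IsProbabilityMeasure μ]
    (a a' : ℝ) (ha : 0 < a) (ha' : 0 < a') (hne : a ≠ a')
    (V : ℕ → Ω → ℝ)
    (hindep : iIndepFun V μ)
    (hexp : ∀ i, IsExpRV μ 2 (V i)) :
    ∀ᵐ ω ∂μ,
      (∃ c : ℝ, ∀ᶠ d : ℕ in atTop,
        (∑ i ∈ Finset.Icc 1 d,
            |2 * V i ω / (2 + i * a) - 2 * V i ω / (2 + i * a')|) ≤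
          c * |a - a'| * Real.log d) ∧
      limsup (fun d : ℕ =>
          (1 / Real.log d) *
            ∑ i ∈ Finset.Icc 1 d,
              |2 * V i ω / (2 + i * a) - 2 * V i ω / (2 + i * a')|)
        atTop ≤ |a - a'| / (a * a') := by
  have habs : 0 < |a - a'| := abs_pos.2 (sub_ne_zero.2 hne)
  set K := 2 * |a - a'| / (a * a') with hKdef
  have hKpos : 0 < K := by positivity
  have hint : Integrable (V 1) μ := (hexp 1).integrable
  have hpair : Pairwise (Function.onFun (fun f g => IndepFun f g μ) fun n => V (n+1)) :=
    fun i j hij => hindep.indepFun (by omega)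
  have hident : ∀ i, IdentDistrib (V (i+1)) (V (0+1)) μ μ :=
    fun i => (hexp (i+1)).identDistrib (hexp (0+1))
  have hSLLN := strong_law_ae (μ := μ) (fun n => V (n+1)) hint hpair hident
  have hmean : ∫ ω, V (0+1) ω ∂μ = 1/2 := (hexp 1).integral_eq
  have hposae : ∀ᵐ ω ∂μ, ∀ i, 0 < V i ω := ae_all_iff.2 fun i => (hexp i).pos_ae
  filter_upwards [hSLLN, hposae] with ω hT hpos
  have hvpos : ∀ i, 0 ≤ V i ω := fun i => (hpos i).le
  have hTend : Tendsto (fun n : ℕ => ((n:ℝ))⁻¹ * ∑ j ∈ Finset.range n, V (j+1) ω)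
      atTop (𝓝 (1/2)) := by
    rw [hmean] at hT
    simpa [smul_eq_mul] using hT
  have hdet := det_limsup (fun i => V i ω) hvpos hTend
  -- termwise bound
  have hterm : ∀ i : ℕ, 1 ≤ i →
      |2 * V i ω / (2 + (i:ℝ) * a) - 2 * V i ω / (2 + (i:ℝ) * a')| ≤
        K * (V i ω / (i:ℝ)) := by
    intro i hi
    have hi1 : (1:ℝ) ≤ (i:ℝ) := by exact_mod_cast hi
    have hi0 : (0:ℝ) < (i:ℝ) := by linarith
    have hVnn := hvpos i
    have hx : (0:ℝ) < 2 + (i:ℝ) * a := by positivity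
    have hy : (0:ℝ) < 2 + (i:ℝ) * a' := by positivity
    have heq : 2 * V i ω / (2 + (i:ℝ) * a) - 2 * V i ω / (2 + (i:ℝ) * a') =
        (2 * V i ω * (i:ℝ) / ((2 + (i:ℝ) * a) * (2 + (i:ℝ) * a'))) * (a' - a) := by
      field_simp
      ring
    rw [heq, abs_mul, abs_of_nonneg (by positivity :
      (0:ℝ) ≤ 2 * V i ω * (i:ℝ) / ((2 + (i:ℝ) * a) * (2 + (i:ℝ) * a'))),
      abs_sub_comm a' a]
    have hxy : ((i:ℝ) * a) * ((i:ℝ) * a') ≤ (2 + (i:ℝ) * a) * (2 + (i:ℝ) * a') := by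
      nlinarith [mul_pos hi0 ha, mul_pos hi0 ha']
    have step1 : 2 * V i ω * (i:ℝ) / ((2 + (i:ℝ) * a) * (2 + (i:ℝ) * a')) * |a - a'| ≤
        2 * V i ω * (i:ℝ) / (((i:ℝ) * a) * ((i:ℝ) * a')) * |a - a'| := by
      apply mul_le_mul_of_nonneg_right _ (abs_nonneg _)
      apply div_le_div_of_nonneg_left (by positivity) (by positivity) hxy
    have step2 : 2 * V i ω * (i:ℝ) / (((i:ℝ) * a) * ((i:ℝ) * a')) * |a - a'| =
        K * (V i ω / (i:ℝ)) := by
      rw [hKdef]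
      field_simp
    linarith [step1, step2 ▸ step1]
  -- sum bound
  have hreindex : ∀ d : ℕ, (∑ i ∈ Finset.Icc 1 d, V i ω / (i:ℝ)) =
      ∑ j ∈ Finset.range d, V (j+1) ω / ((j:ℝ)+1) := by
    intro d
    rw [← Finset.Ico_add_one_right_eq_Icc, Finset.sum_Ico_eq_sum_range]
    apply Finset.sum_congr (by norm_num)
    intro j _
    rw [add_comm 1 j]
    push_cast
    ring
  have hsum : ∀ d : ℕ,
      (∑ i ∈ Finset.Icc 1 d, |2 * V i ω / (2 + (i:ℝ) * a) - 2 * V i ω / (2 + (i:ℝ) * a')|)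
        ≤ K * ∑ j ∈ Finset.range d, V (j+1) ω / ((j:ℝ)+1) := by
    intro d
    calc (∑ i ∈ Finset.Icc 1 d,
          |2 * V i ω / (2 + (i:ℝ) * a) - 2 * V i ω / (2 + (i:ℝ) * a')|)
        ≤ ∑ i ∈ Finset.Icc 1 d, K * (V i ω / (i:ℝ)) :=
          Finset.sum_le_sum fun i hi => hterm i (Finset.mem_Icc.1 hi).1
      _ = K * ∑ i ∈ Finset.Icc 1 d, V i ω / (i:ℝ) := by rw [Finset.mul_sum]
      _ = K * ∑ j ∈ Finset.range d, V (j+1) ω / ((j:ℝ)+1) := by rw [hreindex]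
  have hkey : ∀ b : ℝ, |a - a'| / (a * a') < b → ∀ᶠ d : ℕ in atTop,
      (1/Real.log d) * (∑ i ∈ Finset.Icc 1 d,
        |2 * V i ω / (2 + (i:ℝ) * a) - 2 * V i ω / (2 + (i:ℝ) * a')|) ≤ b := by
    intro b hb
    have hb2 : 1/2 < b / K := by
      rw [lt_div_iff₀ hKpos]
      have : 1/2 * K = |a - a'| / (a * a') := by rw [hKdef]; ring
      linarith [this ▸ hb]
    filter_upwards [hdet (b/K) hb2] with d hd
    have hlognn : (0:ℝ) ≤ 1/Real.log d := by
      have := log_nat_nonneg d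
      positivity
    calc (1/Real.log d) * (∑ i ∈ Finset.Icc 1 d,
          |2 * V i ω / (2 + (i:ℝ) * a) - 2 * V i ω / (2 + (i:ℝ) * a')|)
        ≤ (1/Real.log d) * (K * ∑ j ∈ Finset.range d, V (j+1) ω / ((j:ℝ)+1)) :=
          mul_le_mul_of_nonneg_left (hsum d) hlognn
      _ = K * ((1/Real.log d) * ∑ j ∈ Finset.range d, V (j+1) ω / ((j:ℝ)+1)) := by ring
      _ ≤ K * (b / K) := mul_le_mul_of_nonneg_left hd hKpos.le
      _ = b := by field_simp
  constructor
  · refine ⟨2/(a*a'), ?_⟩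
    have hK2 : |a - a'| / (a * a') < K := by
      rw [hKdef]
      rw [div_lt_div_iff₀ (by positivity) (by positivity)]
      nlinarith [mul_pos ha ha', habs]
    have hlog : Tendsto (fun d : ℕ => Real.log d) atTop atTop :=
      Real.tendsto_log_atTop.comp tendsto_natCast_atTop_atTop
    filter_upwards [hkey K hK2, hlog.eventually_ge_atTop 1] with d hd hd1
    have hL : (0:ℝ) < Real.log d := lt_of_lt_of_le one_pos hd1
    have : (∑ i ∈ Finset.Icc 1 d,
        |2 * V i ω / (2 + (i:ℝ) * a) - 2 * V i ω / (2 + (i:ℝ) * a')|) ≤ K * Real.log d := by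
      have h1 : Real.log d * ((1/Real.log d) * (∑ i ∈ Finset.Icc 1 d,
          |2 * V i ω / (2 + (i:ℝ) * a) - 2 * V i ω / (2 + (i:ℝ) * a')|)) ≤
          Real.log d * K := mul_le_mul_of_nonneg_left hd hL.le
      rw [mul_comm] at h1
      calc (∑ i ∈ Finset.Icc 1 d,
            |2 * V i ω / (2 + (i:ℝ) * a) - 2 * V i ω / (2 + (i:ℝ) * a')|)
          = Real.log d * ((1/Real.log d) * (∑ i ∈ Finset.Icc 1 d,
            |2 * V i ω / (2 + (i:ℝ) * a) - 2 * V i ω / (2 + (i:ℝ) * a')|)) := by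
            rw [← mul_assoc, mul_one_div_cancel hL.ne', one_mul]
        _ ≤ Real.log d * K := mul_le_mul_of_nonneg_left hd hL.le
        _ = K * Real.log d := by ring
    calc (∑ i ∈ Finset.Icc 1 d,
          |2 * V i ω / (2 + (i:ℝ) * a) - 2 * V i ω / (2 + (i:ℝ) * a')|)
        ≤ K * Real.log d := this
      _ = 2/(a*a') * |a - a'| * Real.log d := by rw [hKdef]; ring
  · refine le_of_forall_gt_imp_ge_of_dense fun b hb => ?_
    apply limsup_le_of_le _ (hkey b hb)
    apply isCoboundedUnder_le_of_le atTop (x := 0)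
    intro d
    have h1 : (0:ℝ) ≤ 1/Real.log d := by
      have := log_nat_nonneg d
      positivity
    have h2 : (0:ℝ) ≤ ∑ i ∈ Finset.Icc 1 d,
        |2 * V i ω / (2 + (i:ℝ) * a) - 2 * V i ω / (2 + (i:ℝ) * a')| :=
      Finset.sum_nonneg fun i _ => abs_nonneg _
    positivity
end

section
/- Fix a > 0, β ∈ [0,1), C > 0, and reals (λ_i)_{i≥1} with -β(2+ia) ≤ λ_i ≤ C(2+ia) for all i. Let (V_i)_{i≥1} be i.i.d. exponential with rate 2 and set U_i = 2V_i/(2+ia+λ_i), V_{a,i} = 2V_i/(2+ia). If limsup_{d→∞} ((log log d)/(log d))·Σ_{i=1}^d |λ_i|/i² = 0, then almost surely limsup_{d→∞} ((log log d)/(log d))·Σ_{i=1}^d |V_{a,i} - U_i| = 0. -/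
open MeasureTheory ProbabilityTheory Filter Real
open scoped ENNReal NNReal

/-- Elementary per-term bound for the coupling distance. -/
lemma pcldv_term_bound {a β lamv v : ℝ} (ha : 0 < a) (hβ0 : 0 ≤ β) (hβ1 : β < 1) {i : ℕ}
    (hi : 1 ≤ i) (hlb : -β * (2 + i * a) ≤ lamv) (hv : 0 ≤ v) :
    |2 * v / (2 + i * a) - 2 * v / (2 + i * a + lamv)| ≤
      2 / ((1 - β) * a ^ 2) * (|lamv| / (i : ℝ) ^ 2) * v := by
  have hi1 : (1 : ℝ) ≤ (i : ℝ) := by exact_mod_cast hi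
  have hA : 0 < 2 + (i : ℝ) * a := by nlinarith
  have hAl : 0 < 2 + (i : ℝ) * a + lamv := by nlinarith
  have h1β : 0 < 1 - β := by linarith
  have key : 2 * v / (2 + (i : ℝ) * a) - 2 * v / (2 + (i : ℝ) * a + lamv)
      = 2 * v * lamv / ((2 + (i : ℝ) * a) * (2 + (i : ℝ) * a + lamv)) := by
    field_simp
    ring
  have hnum : |2 * v * lamv| = 2 * v * |lamv| := by
    rw [abs_mul, abs_of_nonneg (by positivity : (0:ℝ) ≤ 2 * v)]
  have hden : |(2 + (i : ℝ) * a) * (2 + (i : ℝ) * a + lamv)|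
      = (2 + (i : ℝ) * a) * (2 + (i : ℝ) * a + lamv) := abs_of_pos (mul_pos hA hAl)
  rw [key, abs_div, hnum, hden]
  have hrhs : 2 / ((1 - β) * a ^ 2) * (|lamv| / (i : ℝ) ^ 2) * v
      = 2 * v * |lamv| / ((1 - β) * a ^ 2 * (i : ℝ) ^ 2) := by
    field_simp
  rw [hrhs]
  have hdenle : (1 - β) * a ^ 2 * (i : ℝ) ^ 2 ≤ (2 + (i : ℝ) * a) * (2 + (i : ℝ) * a + lamv) := by
    have h1 : (1 - β) * (2 + (i:ℝ) * a) ≤ 2 + (i:ℝ) * a + lamv := by nlinarith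
    have h2 : a * (i:ℝ) ≤ 2 + (i:ℝ) * a := by nlinarith
    have h3 := mul_self_le_mul_self (by positivity : (0:ℝ) ≤ a * (i:ℝ)) h2
    have h4 := mul_le_mul_of_nonneg_left h3 h1β.le
    have h5 := mul_le_mul_of_nonneg_left h1 hA.le
    nlinarith [h4, h5]
  exact div_le_div_of_nonneg_left (by positivity) (by positivity) hdenle

/-- Partial sums of `1/i^2` are bounded by `2`. -/
lemma pcldv_sum_inv_sq (d : ℕ) : ∑ i ∈ Finset.Icc 1 d, (1 : ℝ) / (i : ℝ) ^ 2 ≤ 2 - 1 / d := by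
  induction d with
  | zero => simp
  | succ n ih =>
    rw [Finset.sum_Icc_succ_top (Nat.succ_le_succ (Nat.zero_le n))]
    rcases Nat.eq_zero_or_pos n with hn | hn
    · subst hn; norm_num
    · have hn1 : (1 : ℝ) ≤ (n : ℝ) := by exact_mod_cast hn
      have h1 : (0 : ℝ) < (n : ℝ) := by linarith
      have h2 : (0 : ℝ) < ((n : ℝ) + 1) := by linarith
      have hcast : ((n + 1 : ℕ) : ℝ) = (n : ℝ) + 1 := by push_cast; ring
      rw [hcast]
      have hkey : 1 / ((n : ℝ) + 1) ^ 2 ≤ 1 / (n : ℝ) - 1 / ((n : ℝ) + 1) := by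
        rw [div_sub_div _ _ (ne_of_gt h1) (ne_of_gt h2)]
        rw [div_le_div_iff₀ (by positivity) (by positivity)]
        nlinarith
      linarith

/-- Moments of an exponential rate-2 random variable (bounds suffice). -/
lemma pcldv_exp_moments {Ω : Type*} [MeasurableSpace Ω] (μ : Measure Ω) [IsProbabilityMeasure μ]
    {X : Ω → ℝ} (h : IsExpRV μ 2 X) :
    MemLp X 2 μ ∧ 0 ≤ ∫ ω, X ω ∂μ ∧ (∫ ω, X ω ∂μ) ≤ 1 ∧ variance X μ ≤ 2 ∧
      (∀ᵐ ω ∂μ, 0 < X ω) := by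
  obtain ⟨hm, htail⟩ := h
  have hpos : ∀ᵐ ω ∂μ, 0 < X ω := by
    have h0 := htail 0 le_rfl
    simp only [mul_zero, neg_zero, Real.exp_zero, ENNReal.ofReal_one] at h0
    have hms : MeasurableSet {ω | X ω > 0} := hm measurableSet_Ioi
    rw [ae_iff]
    have hset : {ω | ¬ 0 < X ω} = {ω | X ω > 0}ᶜ := by ext ω; simp
    rw [hset, measure_compl hms (measure_ne_top μ _), h0, measure_univ, tsub_self]
  set W : Ω → ℝ := fun ω => max (X ω) 0 with hWdef
  have hWmeas : Measurable W := hm.max measurable_const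
  have hWnn : ∀ ω, 0 ≤ W ω := fun ω => le_max_right _ _
  have hWX : W =ᵐ[μ] X := hpos.mono fun ω hω => max_eq_left hω.le
  have tailW : ∀ t : ℝ, 0 < t → μ {ω | t < W ω} = ENNReal.ofReal (Real.exp (-(2 * t))) := by
    intro t ht
    have hset : {ω | t < W ω} = {ω | X ω > t} := by
      ext ω
      simp only [hWdef, Set.mem_setOf_eq, lt_max_iff, gt_iff_lt]
      exact or_iff_left (not_lt.mpr ht.le)
    rw [hset, htail t ht.le]
  have hexpint : IntegrableOn (fun t : ℝ => Real.exp (-t)) (Set.Ioi (0:ℝ)) := by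
    simpa using exp_neg_integrableOn_Ioi 0 one_pos
  have E1 : ∫⁻ ω, ENNReal.ofReal (W ω) ∂μ ≤ 1 := by
    rw [lintegral_eq_lintegral_meas_lt μ (Filter.Eventually.of_forall hWnn)
      hWmeas.aemeasurable]
    calc ∫⁻ t in Set.Ioi (0:ℝ), μ {a | t < W a}
        = ∫⁻ t in Set.Ioi (0:ℝ), ENNReal.ofReal (Real.exp (-(2 * t))) :=
          setLIntegral_congr_fun measurableSet_Ioi
            (fun t ht => tailW t ht)
      _ ≤ ∫⁻ t in Set.Ioi (0:ℝ), ENNReal.ofReal (Real.exp (-t)) := by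
          refine lintegral_mono_ae ?_
          rw [ae_restrict_iff' measurableSet_Ioi]
          refine Filter.Eventually.of_forall fun t ht => ?_
          exact ENNReal.ofReal_le_ofReal (Real.exp_le_exp.2 (by simp at ht ⊢; linarith))
      _ = ENNReal.ofReal (∫ t in Set.Ioi (0:ℝ), Real.exp (-t)) :=
          (ofReal_integral_eq_lintegral_ofReal hexpint
            (Filter.Eventually.of_forall fun t => (Real.exp_pos _).le)).symm
      _ = 1 := by rw [integral_exp_neg_Ioi_zero, ENNReal.ofReal_one]
  have E2 : ∫⁻ ω, ENNReal.ofReal (W ω ^ 2) ∂μ ≤ 2 := by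
    have g_intble : ∀ t > (0:ℝ), IntervalIntegrable (fun s => 2 * s) volume 0 t := fun t _ =>
      (continuous_const.mul continuous_id).intervalIntegrable _ _
    have g_nn : ∀ᵐ t ∂(volume.restrict (Set.Ioi (0:ℝ))), 0 ≤ 2 * t := by
      rw [ae_restrict_iff' measurableSet_Ioi]
      exact Filter.Eventually.of_forall fun t ht => by simp at ht; linarith
    have key := lintegral_comp_eq_lintegral_meas_lt_mul μ
      (Filter.Eventually.of_forall hWnn) hWmeas.aemeasurable g_intble g_nn
    have hsq : ∀ ω, (∫ t in (0:ℝ)..W ω, 2 * t) = W ω ^ 2 := by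
      intro ω
      rw [intervalIntegral.integral_const_mul, integral_id]
      ring
    simp_rw [hsq] at key
    rw [key]
    calc ∫⁻ t in Set.Ioi (0:ℝ), μ {a | t < W a} * ENNReal.ofReal (2 * t)
        ≤ ∫⁻ t in Set.Ioi (0:ℝ), ENNReal.ofReal (2 * Real.exp (-t)) := by
          refine lintegral_mono_ae ?_
          rw [ae_restrict_iff' measurableSet_Ioi]
          refine Filter.Eventually.of_forall fun t ht => ?_
          simp only [Set.mem_Ioi] at ht
          rw [tailW t ht, ← ENNReal.ofReal_mul (by positivity)]
          refine ENNReal.ofReal_le_ofReal ?_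
          have h1 : t ≤ Real.exp t := (by linarith : t ≤ t + 1).trans (Real.add_one_le_exp t)
          have h2 : Real.exp t * Real.exp (-(2 * t)) = Real.exp (-t) := by
            rw [← Real.exp_add]; ring_nf
          nlinarith [Real.exp_pos (-(2 * t))]
      _ = ENNReal.ofReal (∫ t in Set.Ioi (0:ℝ), 2 * Real.exp (-t)) :=
          (ofReal_integral_eq_lintegral_ofReal (hexpint.const_mul 2)
            (Filter.Eventually.of_forall fun t => by positivity)).symm
      _ = 2 := by
          rw [MeasureTheory.integral_const_mul, integral_exp_neg_Ioi_zero]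
          norm_num
  have hW2int : Integrable (fun ω => W ω ^ 2) μ := by
    refine ⟨(hWmeas.pow_const 2).aestronglyMeasurable, ?_⟩
    show (∫⁻ ω, ‖W ω ^ 2‖ₑ ∂μ) < ⊤
    have heq : ∀ ω, ‖W ω ^ 2‖ₑ = ENNReal.ofReal (W ω ^ 2) := fun ω =>
      Real.enorm_eq_ofReal (sq_nonneg _)
    calc ∫⁻ ω, ‖W ω ^ 2‖ₑ ∂μ = ∫⁻ ω, ENNReal.ofReal (W ω ^ 2) ∂μ :=
          lintegral_congr heq
      _ ≤ 2 := E2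
      _ < ⊤ := by norm_num
  have hWm2 : MemLp W 2 μ := (memLp_two_iff_integrable_sq hWmeas.aestronglyMeasurable).2 hW2int
  have hXm2 : MemLp X 2 μ := hWm2.ae_eq hWX
  have hEW : ∫ ω, W ω ∂μ ≤ 1 := by
    rw [integral_eq_lintegral_of_nonneg_ae (Filter.Eventually.of_forall hWnn)
      hWmeas.aestronglyMeasurable]
    calc (∫⁻ ω, ENNReal.ofReal (W ω) ∂μ).toReal ≤ (1 : ℝ≥0∞).toReal :=
          ENNReal.toReal_mono ENNReal.one_ne_top E1
      _ = 1 := by simp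
  have hEX : ∫ ω, X ω ∂μ = ∫ ω, W ω ∂μ := integral_congr_ae hWX.symm
  have hEXnn : 0 ≤ ∫ ω, X ω ∂μ := integral_nonneg_of_ae (hpos.mono fun ω hω => hω.le)
  have hEW2 : ∫ ω, W ω ^ 2 ∂μ ≤ 2 := by
    rw [integral_eq_lintegral_of_nonneg_ae (Filter.Eventually.of_forall fun ω => sq_nonneg _)
      (hWmeas.pow_const 2).aestronglyMeasurable]
    calc (∫⁻ ω, ENNReal.ofReal (W ω ^ 2) ∂μ).toReal ≤ (2 : ℝ≥0∞).toReal :=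
          ENNReal.toReal_mono (by norm_num) E2
      _ = 2 := by simp
  have hvar : variance X μ ≤ 2 := by
    rw [variance_eq_sub hXm2]
    have hX2W2 : μ[X ^ 2] = ∫ ω, W ω ^ 2 ∂μ := by
      refine integral_congr_ae ?_
      filter_upwards [hWX] with ω hω
      simp [Pi.pow_apply, hω]
    have := sq_nonneg (μ[X])
    calc μ[X ^ 2] - μ[X] ^ 2 ≤ μ[X ^ 2] := by linarith
      _ = ∫ ω, W ω ^ 2 ∂μ := hX2W2
      _ ≤ 2 := hEW2
  exact ⟨hXm2, hEXnn, by rw [hEX]; exact hEW, hvar, hpos⟩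

theorem perturbed_coupling_L1_distance_vanishes
    {Ω : Type*} [MeasurableSpace Ω] (μ : Measure Ω) [IsProbabilityMeasure μ]
    (a β C : ℝ) (ha : 0 < a) (hβ0 : 0 ≤ β) (hβ1 : β < 1) (hC : 0 < C)
    (lam : ℕ → ℝ)
    (hlam_lb : ∀ i : ℕ, -β * (2 + i * a) ≤ lam i)
    (hlam_ub : ∀ i : ℕ, lam i ≤ C * (2 + i * a))
    (V : ℕ → Ω → ℝ)
    (hindep : iIndepFun V μ)
    (hexp : ∀ i, IsExpRV μ 2 (V i))
    (hsmall : Tendsto (fun d : ℕ =>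
        (Real.log (Real.log d) / Real.log d) *
          ∑ i ∈ Finset.Icc 1 d, |lam i| / (i : ℝ)^2)
      atTop (nhds 0)) :
    ∀ᵐ ω ∂μ, Tendsto (fun d : ℕ =>
        (Real.log (Real.log d) / Real.log d) *
          ∑ i ∈ Finset.Icc 1 d,
            |2 * V i ω / (2 + i * a) - 2 * V i ω / (2 + i * a + lam i)|)
      atTop (nhds 0) := by
  classical
  have hmom := fun i => pcldv_exp_moments μ (hexp i)
  have hXm2 : ∀ i, MemLp (V i) 2 μ := fun i => (hmom i).1
  have hXint : ∀ i, Integrable (V i) μ := fun i => (hXm2 i).integrable one_le_two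
  -- notation
  set w : ℕ → ℝ := fun i => |lam i| / (i : ℝ) ^ 2 with hwdef
  set m : ℕ → ℝ := fun i => ∫ ω, V i ω ∂μ with hmdef
  have hmnn : ∀ i, 0 ≤ m i := fun i => (hmom i).2.1
  have hm1 : ∀ i, m i ≤ 1 := fun i => (hmom i).2.2.1
  have hvarV : ∀ i, variance (V i) μ ≤ 2 := fun i => (hmom i).2.2.2.1
  have hwnn : ∀ i, 0 ≤ w i := fun i => by positivity
  -- bound on the weights
  set M : ℝ := max β C with hMdef
  have hM0 : 0 < M := lt_max_of_lt_right hC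
  set K₂ : ℝ := M * (2 + a) with hK₂def
  have hK₂0 : 0 < K₂ := by positivity
  have hwle : ∀ i : ℕ, 1 ≤ i → w i ≤ K₂ / i := by
    intro i hi
    have hi1 : (1 : ℝ) ≤ (i : ℝ) := by exact_mod_cast hi
    have hA : 0 < 2 + (i : ℝ) * a := by nlinarith
    have habs : |lam i| ≤ M * (2 + (i : ℝ) * a) := by
      rw [abs_le]
      constructor
      · have := hlam_lb i
        have hβM : β ≤ M := le_max_left _ _
        nlinarith
      · have := hlam_ub i
        have hCM : C ≤ M := le_max_right _ _
        nlinarith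
    have h2ia : 2 + (i : ℝ) * a ≤ (2 + a) * i := by nlinarith
    rw [hwdef]
    simp only
    rw [div_le_div_iff₀ (by positivity) (by positivity)]
    calc |lam i| * (i : ℝ) ≤ M * (2 + (i : ℝ) * a) * i := by
          have : (0:ℝ) ≤ (i : ℝ) := by positivity
          exact mul_le_mul_of_nonneg_right habs this
      _ ≤ K₂ * (i : ℝ) ^ 2 := by
          have h4 : (0:ℝ) ≤ (i:ℝ) := by positivity
          have h5 := mul_le_mul_of_nonneg_right h2ia h4
          calc M * (2 + (i:ℝ) * a) * (i:ℝ) = M * ((2 + (i:ℝ) * a) * (i:ℝ)) := by ring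
            _ ≤ M * ((2 + a) * (i:ℝ) * (i:ℝ)) := by
                refine mul_le_mul_of_nonneg_left ?_ hM0.le
                nlinarith
            _ = K₂ * (i : ℝ) ^ 2 := by rw [hK₂def]; ring
  -- centered variables and martingale
  set g : ℕ → ℝ → ℝ := fun i x => w i * (x - m i) with hgdef
  have hgmeas : ∀ i, Measurable (g i) := fun i =>
    (measurable_id.sub_const _).const_mul _
  set Y : ℕ → Ω → ℝ := fun i => g i ∘ V i with hYdef
  set f : ℕ → Ω → ℝ := fun n ω => ∑ i ∈ Finset.Icc 1 n, Y i ω with hfdef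
  have hYint : ∀ i, Integrable (Y i) μ := fun i =>
    (((hXint i).sub (integrable_const (m i))).const_mul (w i))
  have hfint : ∀ n, Integrable (f n) μ := fun n =>
    integrable_finset_sum _ fun i _ => hYint i
  have hYmean : ∀ i, ∫ ω, Y i ω ∂μ = 0 := by
    intro i
    have : ∫ ω, Y i ω ∂μ = w i * ((∫ ω, V i ω ∂μ) - m i) := by
      rw [show (fun ω => Y i ω) = fun ω => w i * (V i ω - m i) from rfl]
      rw [MeasureTheory.integral_const_mul, integral_sub (hXint i) (integrable_const _), integral_const]
      simp
    rw [this, hmdef]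
    simp
  have hYm2 : ∀ i, MemLp (Y i) 2 μ := fun i =>
    ((hXm2 i).sub (memLp_const (m i))).const_mul (w i)
  have hfm2 : ∀ n, MemLp (f n) 2 μ := fun n =>
    memLp_finset_sum _ fun i _ => hYm2 i
  -- filtration
  set 𝒢 : Filtration ℕ (inferInstance : MeasurableSpace Ω) :=
    { seq := fun n => ⨆ i ∈ Finset.Icc 1 n, MeasurableSpace.comap (V i) inferInstance
      mono' := by
        intro n k hnk
        refine iSup₂_le fun i hi => ?_
        exact le_iSup₂ (f := fun i (_ : i ∈ Finset.Icc 1 k) =>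
          MeasurableSpace.comap (V i) inferInstance) i
          (Finset.mem_Icc.2 ⟨(Finset.mem_Icc.1 hi).1, le_trans (Finset.mem_Icc.1 hi).2 hnk⟩)
      le' := fun n => iSup₂_le fun i _ => (hexp i).1.comap_le } with h𝒢def
  have hYmeas𝒢 : ∀ n i, i ∈ Finset.Icc 1 n → Measurable[𝒢 n] (Y i) := by
    intro n i hi
    have h1 : Measurable[MeasurableSpace.comap (V i) inferInstance] (V i) :=
      Measurable.of_comap_le le_rfl
    have h2 : Measurable[MeasurableSpace.comap (V i) inferInstance] (Y i) :=
      (hgmeas i).comp h1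
    refine h2.mono ?_ le_rfl
    exact le_iSup₂ (f := fun i (_ : i ∈ Finset.Icc 1 n) =>
      MeasurableSpace.comap (V i) inferInstance) i hi
  have hadp : StronglyAdapted 𝒢 f := by
    intro n
    have : Measurable[𝒢 n] (f n) :=
      Finset.measurable_sum _ fun i hi => hYmeas𝒢 n i hi
    exact this.stronglyMeasurable
  have hmart : Martingale f 𝒢 μ := by
    refine martingale_nat hadp hfint fun n => ?_
    have hsplit : f (n + 1) = f n + Y (n + 1) := by
      funext ω
      exact Finset.sum_Icc_succ_top (Nat.succ_le_succ (Nat.zero_le n)) _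
    have hIndep : Indep (MeasurableSpace.comap (V (n + 1)) inferInstance) (𝒢 n) μ := by
      have hcompl := ProbabilityTheory.indep_biSup_compl
        (fun k => (hexp k).1.comap_le) hindep {n + 1}
      have hl : MeasurableSpace.comap (V (n + 1)) inferInstance ≤
          ⨆ i ∈ ({n + 1} : Set ℕ), MeasurableSpace.comap (V i) inferInstance :=
        le_iSup₂ (f := fun i (_ : i ∈ ({n + 1} : Set ℕ)) =>
          MeasurableSpace.comap (V i) inferInstance) (n + 1) rfl
      have hr : (𝒢 n : MeasurableSpace Ω) ≤
          ⨆ i ∈ (({n + 1} : Set ℕ)ᶜ : Set ℕ), MeasurableSpace.comap (V i) inferInstance := by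
        refine iSup₂_le fun i hi => ?_
        have hine : i ∈ (({n + 1} : Set ℕ)ᶜ : Set ℕ) := by
          simp only [Set.mem_compl_iff, Set.mem_singleton_iff]
          have := (Finset.mem_Icc.1 hi).2
          omega
        exact le_iSup₂ (f := fun i (_ : i ∈ (({n + 1} : Set ℕ)ᶜ : Set ℕ)) =>
          MeasurableSpace.comap (V i) inferInstance) i hine
      exact indep_of_indep_of_le_right (indep_of_indep_of_le_left hcompl hl) hr
    have hsm : StronglyMeasurable[MeasurableSpace.comap (V (n + 1)) inferInstance] (Y (n + 1)) :=
      ((hgmeas (n + 1)).comp (Measurable.of_comap_le le_rfl)).stronglyMeasurable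
    have h3 : μ[Y (n + 1)|𝒢 n] =ᵐ[μ] fun _ => μ[Y (n + 1)] :=
      condExp_indep_eq ((hexp (n + 1)).1.comap_le) (𝒢.le n) hsm hIndep
    have h1 : μ[f (n + 1)|𝒢 n] =ᵐ[μ] μ[f n|𝒢 n] + μ[Y (n + 1)|𝒢 n] := by
      rw [hsplit]
      exact condExp_add (hfint n) (hYint (n + 1)) _
    have h2 : μ[f n|𝒢 n] = f n :=
      condExp_of_stronglyMeasurable (𝒢.le n) (hadp n) (hfint n)
    filter_upwards [h1, h3] with ω hω1 hω3
    rw [hω1, Pi.add_apply, hω3, h2, hYmean (n + 1), add_zero]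
  -- L¹ boundedness via L² bound
  have hfmean : ∀ n, μ[f n] = 0 := by
    intro n
    have : μ[f n] = ∑ i ∈ Finset.Icc 1 n, ∫ ω, Y i ω ∂μ :=
      integral_finset_sum _ fun i _ => hYint i
    rw [this]
    exact Finset.sum_eq_zero fun i _ => hYmean i
  have hvarf : ∀ n, variance (f n) μ ≤ 4 * K₂ ^ 2 := by
    intro n
    have hfsum : f n = ∑ i ∈ Finset.Icc 1 n, Y i := by
      funext ω
      rw [Finset.sum_apply]
    rw [hfsum, IndepFun.variance_sum (fun i _ => hYm2 i)
      (fun i _ j _ hij => (hindep.indepFun hij).comp (hgmeas i) (hgmeas j))]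
    have hvarY : ∀ i ∈ Finset.Icc 1 n, variance (Y i) μ ≤ 2 * K₂ ^ 2 * ((1:ℝ) / i ^ 2) := by
      intro i hi
      have hi1 : 1 ≤ i := (Finset.mem_Icc.1 hi).1
      have hi1' : (1 : ℝ) ≤ (i : ℝ) := by exact_mod_cast hi1
      have hYvar : variance (Y i) μ = μ[Y i ^ (2 : ℕ)] :=
        variance_of_integral_eq_zero (hYm2 i).aemeasurable (hYmean i)
      have hY2 : μ[Y i ^ (2 : ℕ)] = w i ^ 2 * μ[(V i - (fun _ : Ω => m i)) ^ (2 : ℕ)] := by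
        have : (Y i ^ (2 : ℕ)) = fun ω => w i ^ 2 * ((V i - (fun _ : Ω => m i)) ^ (2 : ℕ)) ω := by
          funext ω
          simp [hYdef, hgdef, Pi.pow_apply, Pi.sub_apply, mul_pow]
        rw [this, MeasureTheory.integral_const_mul]
      have hVvar : μ[(V i - (fun _ : Ω => m i)) ^ (2 : ℕ)] = variance (V i) μ := by
        exact (variance_eq_integral (hXm2 i).aemeasurable).symm
      have hwsq : w i ^ 2 ≤ K₂ ^ 2 * (1 / (i : ℝ) ^ 2) := by
        have h1 := hwle i hi1
        have h2 : (0:ℝ) < (i:ℝ) := by linarith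
        have := mul_self_le_mul_self (hwnn i) h1
        calc w i ^ 2 = w i * w i := sq (w i) ▸ by ring
          _ ≤ (K₂ / i) * (K₂ / i) := this
          _ = K₂ ^ 2 * (1 / (i : ℝ) ^ 2) := by field_simp
      have hVnn : 0 ≤ variance (V i) μ := variance_nonneg _ _
      calc variance (Y i) μ = w i ^ 2 * variance (V i) μ := by rw [hYvar, hY2, hVvar]
        _ ≤ (K₂ ^ 2 * (1 / (i : ℝ) ^ 2)) * 2 := by
            refine mul_le_mul hwsq (hvarV i) hVnn ?_
            positivity
        _ = 2 * K₂ ^ 2 * ((1:ℝ) / i ^ 2) := by ring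
    calc ∑ i ∈ Finset.Icc 1 n, variance (Y i) μ
        ≤ ∑ i ∈ Finset.Icc 1 n, 2 * K₂ ^ 2 * ((1:ℝ) / i ^ 2) := Finset.sum_le_sum hvarY
      _ = 2 * K₂ ^ 2 * ∑ i ∈ Finset.Icc 1 n, (1:ℝ) / i ^ 2 := by rw [Finset.mul_sum]
      _ ≤ 2 * K₂ ^ 2 * 2 := by
          have h1 := pcldv_sum_inv_sq n
          have h2 : (0:ℝ) ≤ 1 / n := by positivity
          have h3 : ∑ i ∈ Finset.Icc 1 n, (1:ℝ) / i ^ 2 ≤ 2 := by linarith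
          nlinarith
      _ = 4 * K₂ ^ 2 := by ring
  have hL1 : ∀ n, eLpNorm (f n) 1 μ ≤ ((1 + 4 * K₂ ^ 2).toNNReal : ℝ≥0∞) := by
    intro n
    have hint2 : Integrable (fun ω => f n ω ^ 2) μ := (hfm2 n).integrable_sq
    have hf2le : ∫ ω, f n ω ^ 2 ∂μ ≤ 4 * K₂ ^ 2 := by
      have : variance (f n) μ = μ[f n ^ (2 : ℕ)] :=
        variance_of_integral_eq_zero (hfm2 n).aemeasurable (hfmean n)
      have h2 : μ[f n ^ (2 : ℕ)] = ∫ ω, f n ω ^ 2 ∂μ := by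
        refine integral_congr_ae (Filter.Eventually.of_forall fun ω => ?_)
        simp [Pi.pow_apply]
      rw [← h2, ← this]
      exact hvarf n
    rw [eLpNorm_one_eq_lintegral_enorm]
    have hcoe : ((1 + 4 * K₂ ^ 2).toNNReal : ℝ≥0∞) = ENNReal.ofReal (1 + 4 * K₂ ^ 2) := rfl
    rw [hcoe]
    calc ∫⁻ ω, ‖f n ω‖ₑ ∂μ
        ≤ ∫⁻ ω, ENNReal.ofReal (1 + f n ω ^ 2) ∂μ := by
          refine lintegral_mono fun ω => ?_
          rw [← ofReal_norm_eq_enorm]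
          refine ENNReal.ofReal_le_ofReal ?_
          have h1 : ‖f n ω‖ = |f n ω| := Real.norm_eq_abs _
          nlinarith [abs_nonneg (f n ω), sq_abs (f n ω)]
      _ = ENNReal.ofReal (∫ ω, (1 + f n ω ^ 2) ∂μ) :=
          (ofReal_integral_eq_lintegral_ofReal ((integrable_const 1).add hint2)
            (Filter.Eventually.of_forall fun ω => by
              simp only [Pi.add_apply, Pi.zero_apply]
              nlinarith [sq_nonneg (f n ω)])).symm
      _ ≤ ENNReal.ofReal (1 + 4 * K₂ ^ 2) := by
          refine ENNReal.ofReal_le_ofReal ?_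
          rw [integral_add (integrable_const 1) hint2, integral_const]
          simp only [probReal_univ, measure_univ, ENNReal.toReal_one, smul_eq_mul, one_mul]
          linarith
  -- a.s. convergence of the martingale
  have hconv := hmart.submartingale.ae_tendsto_limitProcess hL1
  have hVpos : ∀ᵐ ω ∂μ, ∀ i, 0 < V i ω := ae_all_iff.2 fun i => (hmom i).2.2.2.2
  -- c_d → 0
  have hc0 : Tendsto (fun d : ℕ => Real.log (Real.log d) / Real.log d) atTop (nhds 0) := by
    have h1 : Tendsto (fun x : ℝ => Real.log x / x) atTop (nhds 0) :=
      Real.isLittleO_log_id_atTop.tendsto_div_nhds_zero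
    exact h1.comp (Real.tendsto_log_atTop.comp tendsto_natCast_atTop_atTop)
  have hcnn : ∀ d : ℕ, 3 ≤ d → 0 ≤ Real.log (Real.log d) / Real.log d := by
    intro d hd
    have hd3 : (3 : ℝ) ≤ (d : ℝ) := by exact_mod_cast hd
    have hd0 : (0 : ℝ) < (d : ℝ) := by linarith
    have hlog1 : 1 ≤ Real.log d := by
      rw [Real.le_log_iff_exp_le hd0]
      calc Real.exp 1 ≤ 2.7182818286 := (Real.exp_one_lt_d9).le
        _ ≤ (d : ℝ) := by linarith
    exact div_nonneg (Real.log_nonneg hlog1) (by linarith)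
  set Kc : ℝ := 2 / ((1 - β) * a ^ 2) with hKcdef
  have hKc0 : 0 < Kc := by
    have : 0 < 1 - β := by linarith
    positivity
  filter_upwards [hconv, hVpos] with ω hfconv hVp
  set c : ℕ → ℝ := fun d => Real.log (Real.log d) / Real.log d with hcdef
  -- upper bound sequence tends to 0
  have hup : Tendsto (fun d : ℕ => Kc * (c d * f d ω +
      c d * ∑ i ∈ Finset.Icc 1 d, w i)) atTop (nhds 0) := by
    have ht1 : Tendsto (fun d : ℕ => c d * f d ω) atTop (nhds 0) := by
      have := hc0.mul hfconv
      simpa using this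
    have ht2 : Tendsto (fun d : ℕ => c d * ∑ i ∈ Finset.Icc 1 d, w i) atTop (nhds 0) := hsmall
    have := (ht1.add ht2).const_mul Kc
    simpa using this
  refine tendsto_of_tendsto_of_tendsto_of_le_of_le' tendsto_const_nhds hup ?_ ?_
  · -- eventual nonnegativity
    filter_upwards [eventually_ge_atTop 3] with d hd
    refine mul_nonneg (hcnn d hd) ?_
    exact Finset.sum_nonneg fun i _ => abs_nonneg _
  · -- eventual upper bound
    filter_upwards [eventually_ge_atTop 3] with d hd
    have hsum1 : ∑ i ∈ Finset.Icc 1 d,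
        |2 * V i ω / (2 + i * a) - 2 * V i ω / (2 + i * a + lam i)|
        ≤ ∑ i ∈ Finset.Icc 1 d, Kc * (w i * V i ω) := by
      refine Finset.sum_le_sum fun i hi => ?_
      have hi1 : 1 ≤ i := (Finset.mem_Icc.1 hi).1
      have := pcldv_term_bound ha hβ0 hβ1 hi1 (hlam_lb i) (hVp i).le
      calc |2 * V i ω / (2 + i * a) - 2 * V i ω / (2 + i * a + lam i)|
          ≤ 2 / ((1 - β) * a ^ 2) * (|lam i| / (i : ℝ) ^ 2) * V i ω := this
        _ = Kc * (w i * V i ω) := by rw [hKcdef, hwdef]; ring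
    have hsum2 : ∑ i ∈ Finset.Icc 1 d, Kc * (w i * V i ω)
        = Kc * (f d ω + ∑ i ∈ Finset.Icc 1 d, w i * m i) := by
      rw [← Finset.mul_sum]
      congr 1
      rw [hfdef]
      simp only
      rw [← Finset.sum_add_distrib]
      refine Finset.sum_congr rfl fun i _ => ?_
      simp only [hYdef, hgdef, Function.comp_apply]
      ring
    have hsum3 : ∑ i ∈ Finset.Icc 1 d, w i * m i ≤ ∑ i ∈ Finset.Icc 1 d, w i := by
      refine Finset.sum_le_sum fun i _ => ?_
      calc w i * m i ≤ w i * 1 := mul_le_mul_of_nonneg_left (hm1 i) (hwnn i)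
        _ = w i := mul_one _
    calc (Real.log (Real.log d) / Real.log d) *
        ∑ i ∈ Finset.Icc 1 d,
          |2 * V i ω / (2 + i * a) - 2 * V i ω / (2 + i * a + lam i)|
        ≤ c d * (Kc * (f d ω + ∑ i ∈ Finset.Icc 1 d, w i)) := by
          refine mul_le_mul_of_nonneg_left ?_ (hcnn d hd)
          calc ∑ i ∈ Finset.Icc 1 d,
              |2 * V i ω / (2 + i * a) - 2 * V i ω / (2 + i * a + lam i)|
              ≤ Kc * (f d ω + ∑ i ∈ Finset.Icc 1 d, w i * m i) := by
                rw [← hsum2]; exact hsum1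
            _ ≤ Kc * (f d ω + ∑ i ∈ Finset.Icc 1 d, w i) := by
                refine mul_le_mul_of_nonneg_left (by linarith) hKc0.le
      _ = Kc * (c d * f d ω + c d * ∑ i ∈ Finset.Icc 1 d, w i) := by ring
end

section
/- Let (U_i)_{i≥1} be as in the previous example (U_i = i^{-2/3} off cubes, U_{n³} = n) and let (V_i)_{i≥1} be i.i.d. exponential with rate 2, independent of everything. Then almost surely there exist 0 < c₁ < c₂ with c₁·d^{1/3} ≤ Σ_{i=1}^d min(U_i, V_i) ≤ c₂·d^{1/3} for all large d; in particular liminf_{d→∞} (1/(√d·log d))·Σ_{i=1}^d min(U_i,V_i) = 0 almost surely. -/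
open MeasureTheory ProbabilityTheory Filter Real
open scoped Classical

-- The deterministic gap sequence: `U i = i^(1/3)` (i.e. `n` when `i = n³`) on perfect cubes,
-- and `U i = i^(-2/3)` otherwise.
open Classical in
noncomputable def cubeGap (i : ℕ) : ℝ :=
  if ∃ n : ℕ, i = n ^ 3 then (i : ℝ) ^ ((1:ℝ)/3) else (i : ℝ) ^ (-(2:ℝ)/3)

set_option linter.unusedSectionVars false



/-- Core cube-root difference bounds. -/
lemma cuberoot_diff_ge {a b : ℝ} (ha : 0 ≤ a) (hab : a ≤ b) (hb : 0 < b) :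
    (b - a) / (3 * b ^ ((2:ℝ)/3)) ≤ b ^ ((1:ℝ)/3) - a ^ ((1:ℝ)/3) := by
  set x := b ^ ((1:ℝ)/3) with hx
  set y := a ^ ((1:ℝ)/3) with hy
  have hx0 : 0 < x := Real.rpow_pos_of_pos hb _
  have hy0 : 0 ≤ y := Real.rpow_nonneg ha _
  have hyx : y ≤ x := Real.rpow_le_rpow ha hab (by norm_num)
  have hb3 : x ^ 3 = b := by
    rw [hx, ← Real.rpow_natCast (b ^ ((1:ℝ)/3)) 3, ← Real.rpow_mul hb.le]
    norm_num
  have ha3 : y ^ 3 = a := by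
    rw [hy, ← Real.rpow_natCast (a ^ ((1:ℝ)/3)) 3, ← Real.rpow_mul ha]
    norm_num
  have hb23 : b ^ ((2:ℝ)/3) = x ^ 2 := by
    rw [hx, ← Real.rpow_natCast (b ^ ((1:ℝ)/3)) 2, ← Real.rpow_mul hb.le]
    norm_num
  rw [hb23, ← hb3, ← ha3, div_le_iff₀ (by positivity)]
  nlinarith [sq_nonneg (x - y), sq_nonneg (x + y), mul_nonneg hy0 (sub_nonneg.2 hyx)]

lemma cuberoot_diff_le {a b : ℝ} (ha : 0 < a) (hab : a ≤ b) :
    b ^ ((1:ℝ)/3) - a ^ ((1:ℝ)/3) ≤ (b - a) / (3 * a ^ ((2:ℝ)/3)) := by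
  have hb : 0 < b := lt_of_lt_of_le ha hab
  set x := b ^ ((1:ℝ)/3) with hx
  set y := a ^ ((1:ℝ)/3) with hy
  have hy0 : 0 < y := Real.rpow_pos_of_pos ha _
  have hyx : y ≤ x := Real.rpow_le_rpow ha.le hab (by norm_num)
  have hb3 : x ^ 3 = b := by
    rw [hx, ← Real.rpow_natCast (b ^ ((1:ℝ)/3)) 3, ← Real.rpow_mul hb.le]
    norm_num
  have ha3 : y ^ 3 = a := by
    rw [hy, ← Real.rpow_natCast (a ^ ((1:ℝ)/3)) 3, ← Real.rpow_mul ha.le]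
    norm_num
  have ha23 : a ^ ((2:ℝ)/3) = y ^ 2 := by
    rw [hy, ← Real.rpow_natCast (a ^ ((1:ℝ)/3)) 2, ← Real.rpow_mul ha.le]
    norm_num
  rw [ha23, ← hb3, ← ha3, le_div_iff₀ (by positivity)]
  nlinarith [sq_nonneg (x - y), mul_nonneg hy0.le (sub_nonneg.2 hyx)]



lemma sum_inv23_le (d : ℕ) :
    ∑ i ∈ Finset.Icc 1 d, ((i:ℝ)) ^ (-(2:ℝ)/3) ≤ 3 * (d:ℝ) ^ ((1:ℝ)/3) := by
  have key : ∀ j : ℕ, ((j+1:ℕ):ℝ) ^ (-(2:ℝ)/3)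
      ≤ 3 * (((j+1:ℕ):ℝ) ^ ((1:ℝ)/3) - ((j:ℕ):ℝ) ^ ((1:ℝ)/3)) := by
    intro j
    have hb : (0:ℝ) < (j:ℝ) + 1 := by positivity
    have h := cuberoot_diff_ge (a := (j:ℝ)) (b := (j:ℝ)+1) (Nat.cast_nonneg j)
      (by linarith) hb
    have hrw : ((j:ℝ)+1) ^ (-(2:ℝ)/3) = (((j:ℝ)+1) ^ ((2:ℝ)/3))⁻¹ := by
      rw [← Real.rpow_neg hb.le]; norm_num
    push_cast
    rw [hrw]
    have h2 : (0:ℝ) < ((j:ℝ)+1) ^ ((2:ℝ)/3) := Real.rpow_pos_of_pos hb _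
    have h' := (div_le_iff₀ (by positivity : (0:ℝ) < 3 * ((j:ℝ)+1) ^ ((2:ℝ)/3))).mp h
    rw [inv_le_iff_one_le_mul₀ h2]
    nlinarith [h', h2]
  calc ∑ i ∈ Finset.Icc 1 d, ((i:ℝ)) ^ (-(2:ℝ)/3)
      = ∑ j ∈ Finset.range d, ((j+1:ℕ):ℝ) ^ (-(2:ℝ)/3) := by
        rw [← Finset.Ico_add_one_right_eq_Icc, Finset.sum_Ico_eq_sum_range]
        simp [add_comm]
    _ ≤ ∑ j ∈ Finset.range d, 3 * (((j+1:ℕ):ℝ) ^ ((1:ℝ)/3) - ((j:ℕ):ℝ) ^ ((1:ℝ)/3)) :=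
        Finset.sum_le_sum fun j _ => key j
    _ = 3 * (((d:ℕ):ℝ) ^ ((1:ℝ)/3) - ((0:ℕ):ℝ) ^ ((1:ℝ)/3)) := by
        rw [← Finset.mul_sum, Finset.sum_range_sub (fun n : ℕ => ((n:ℕ):ℝ) ^ ((1:ℝ)/3))]
    _ ≤ 3 * (d:ℝ) ^ ((1:ℝ)/3) := by
        norm_num

lemma sum_inv23_ge (d : ℕ) :
    3 * (((d:ℝ)+1) ^ ((1:ℝ)/3) - 1) ≤ ∑ i ∈ Finset.Icc 1 d, ((i:ℝ)) ^ (-(2:ℝ)/3) := by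
  have key : ∀ j : ℕ, 3 * ((((j+2:ℕ)):ℝ) ^ ((1:ℝ)/3) - (((j+1:ℕ)):ℝ) ^ ((1:ℝ)/3))
      ≤ ((j+1:ℕ):ℝ) ^ (-(2:ℝ)/3) := by
    intro j
    have ha : (0:ℝ) < (j:ℝ) + 1 := by positivity
    have h := cuberoot_diff_le (a := (j:ℝ)+1) (b := (j:ℝ)+2) ha (by linarith)
    have hrw : ((j:ℝ)+1) ^ (-(2:ℝ)/3) = (((j:ℝ)+1) ^ ((2:ℝ)/3))⁻¹ := by
      rw [← Real.rpow_neg ha.le]; norm_num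
    push_cast
    rw [hrw]
    have h2 : (0:ℝ) < ((j:ℝ)+1) ^ ((2:ℝ)/3) := Real.rpow_pos_of_pos ha _
    have h' := (le_div_iff₀ (by positivity : (0:ℝ) < 3 * ((j:ℝ)+1) ^ ((2:ℝ)/3))).mp h
    rw [← one_div, le_div_iff₀ h2]
    nlinarith [h', h2]
  calc 3 * (((d:ℝ)+1) ^ ((1:ℝ)/3) - 1)
      = ∑ j ∈ Finset.range d, 3 * ((((j+2:ℕ)):ℝ) ^ ((1:ℝ)/3) - (((j+1:ℕ)):ℝ) ^ ((1:ℝ)/3)) := by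
        rw [← Finset.mul_sum, Finset.sum_range_sub (fun n : ℕ => (((n+1:ℕ)):ℝ) ^ ((1:ℝ)/3))]
        push_cast
        norm_num
    _ ≤ ∑ j ∈ Finset.range d, ((j+1:ℕ):ℝ) ^ (-(2:ℝ)/3) :=
        Finset.sum_le_sum fun j _ => key j
    _ = ∑ i ∈ Finset.Icc 1 d, ((i:ℝ)) ^ (-(2:ℝ)/3) := by
        rw [← Finset.Ico_add_one_right_eq_Icc, Finset.sum_Ico_eq_sum_range]
        simp [add_comm]

lemma sum_inv43_le (d : ℕ) :
    ∑ i ∈ Finset.Icc 1 d, ((i:ℝ)) ^ (-(4:ℝ)/3) ≤ 4 := by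
  have key : ∀ j : ℕ, ((j+2:ℕ):ℝ) ^ (-(4:ℝ)/3)
      ≤ 3 * ((((j+1:ℕ)):ℝ) ^ (-(1:ℝ)/3) - (((j+2:ℕ)):ℝ) ^ (-(1:ℝ)/3)) := by
    intro j
    have ha : (0:ℝ) < (j:ℝ) + 1 := by positivity
    have hb : (0:ℝ) < (j:ℝ) + 2 := by positivity
    -- b^{1/3} - a^{1/3} ≥ 1/(3 b^{2/3}), with a = j+1, b = j+2
    have h := cuberoot_diff_ge (a := (j:ℝ)+1) (b := (j:ℝ)+2) (by positivity) (by linarith) hb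
    set x := ((j:ℝ)+2) ^ ((1:ℝ)/3) with hxdef
    set y := ((j:ℝ)+1) ^ ((1:ℝ)/3) with hydef
    have hx0 : 0 < x := Real.rpow_pos_of_pos hb _
    have hy0 : 0 < y := Real.rpow_pos_of_pos ha _
    have hyx : y ≤ x := Real.rpow_le_rpow ha.le (by linarith) (by norm_num)
    have hb23 : ((j:ℝ)+2) ^ ((2:ℝ)/3) = x ^ 2 := by
      rw [hxdef, ← Real.rpow_natCast (((j:ℝ)+2) ^ ((1:ℝ)/3)) 2, ← Real.rpow_mul hb.le]
      norm_num
    -- rewrite negative powers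
    have hbm13 : ((j:ℝ)+2) ^ (-(1:ℝ)/3) = x⁻¹ := by
      rw [hxdef, ← Real.rpow_neg hb.le]; norm_num
    have ham13 : ((j:ℝ)+1) ^ (-(1:ℝ)/3) = y⁻¹ := by
      rw [hydef, ← Real.rpow_neg ha.le]; norm_num
    have hbm43 : ((j:ℝ)+2) ^ (-(4:ℝ)/3) = (x^4)⁻¹ := by
      rw [← Real.rpow_natCast x 4, hxdef, ← Real.rpow_mul hb.le, ← Real.rpow_neg hb.le]
      norm_num
    have h' : 1 / (3 * x ^ 2) ≤ x - y := by
      rw [hb23] at h; convert h using 2; ring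
    push_cast
    rw [hbm43, hbm13, ham13]
    -- goal: (x^4)⁻¹ ≤ 3 * (y⁻¹ - x⁻¹)
    have hxy : y⁻¹ - x⁻¹ = (x - y) / (x * y) := by
      rw [inv_eq_one_div, inv_eq_one_div, div_sub_div _ _ (ne_of_gt hy0) (ne_of_gt hx0),
        mul_comm y x]
      ring_nf
    rw [hxy]
    rw [inv_le_iff_one_le_mul₀ (by positivity)]
    have h1 : 1 / (3 * x ^ 2) * (x * y) ≤ (x - y) * (x * y) := by
      apply mul_le_mul_of_nonneg_right h' (by positivity)
    have hyx3 : y ^ 3 = (j:ℝ)+1 := by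
      rw [hydef, ← Real.rpow_natCast (((j:ℝ)+1) ^ ((1:ℝ)/3)) 3, ← Real.rpow_mul ha.le]
      norm_num
    have hxx3 : x ^ 3 = (j:ℝ)+2 := by
      rw [hxdef, ← Real.rpow_natCast (((j:ℝ)+2) ^ ((1:ℝ)/3)) 3, ← Real.rpow_mul hb.le]
      norm_num
    -- 3 * ((x-y)/(x*y)) * x^4 = 3 (x-y) x^3/y ≥ 3·(1/(3x²))·x³/y = x/y ≥ 1
    have expand : 3 * ((x - y)/(x*y)) * x^4 = 3 * (x - y) * (x^3 / y) := by
      field_simp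
    rw [expand]
    have : 3 * (1 / (3 * x ^ 2)) * (x^3 / y) ≤ 3 * (x - y) * (x^3 / y) := by
      apply mul_le_mul_of_nonneg_right _ (by positivity)
      nlinarith [h']
    calc (1:ℝ) = 3 * (1 / (3 * x ^ 2)) * (x^3 / x) := by field_simp
      _ ≤ 3 * (1 / (3 * x ^ 2)) * (x^3 / y) := by
          apply mul_le_mul_of_nonneg_left _ (by positivity)
          exact div_le_div_of_nonneg_left (by positivity) hy0 hyx
      _ ≤ 3 * (x - y) * (x^3 / y) := this
  -- split off i = 1
  rcases Nat.eq_zero_or_pos d with rfl | hd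
  · simp
  have hins : Finset.Icc 1 d = insert 1 (Finset.Icc 2 d) := by
    ext i; simp only [Finset.mem_Icc, Finset.mem_insert]; omega
  rw [hins, Finset.sum_insert (by simp)]
  have h1 : ((1:ℕ):ℝ) ^ (-(4:ℝ)/3) = 1 := by norm_num
  rw [h1]
  have htail : ∑ i ∈ Finset.Icc 2 d, ((i:ℝ)) ^ (-(4:ℝ)/3) ≤ 3 := by
    calc ∑ i ∈ Finset.Icc 2 d, ((i:ℝ)) ^ (-(4:ℝ)/3)
        = ∑ j ∈ Finset.range (d-1), ((j+2:ℕ):ℝ) ^ (-(4:ℝ)/3) := by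
          rw [← Finset.Ico_add_one_right_eq_Icc, Finset.sum_Ico_eq_sum_range]
          have : d + 1 - 2 = d - 1 := by omega
          rw [this]
          refine Finset.sum_congr rfl fun j _ => ?_
          congr 2
          omega
      _ ≤ ∑ j ∈ Finset.range (d-1),
            3 * ((((j+1:ℕ)):ℝ) ^ (-(1:ℝ)/3) - (((j+2:ℕ)):ℝ) ^ (-(1:ℝ)/3)) :=
          Finset.sum_le_sum fun j _ => key j
      _ = 3 * ((((0+1:ℕ)):ℝ) ^ (-(1:ℝ)/3) - ((((d-1)+1:ℕ)):ℝ) ^ (-(1:ℝ)/3)) := by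
          rw [← Finset.mul_sum,
            Finset.sum_range_sub' (fun n : ℕ => (((n+1:ℕ)):ℝ) ^ (-(1:ℝ)/3))]
      _ ≤ 3 := by
          have h0 : (((0+1:ℕ)):ℝ) ^ (-(1:ℝ)/3) = 1 := by norm_num
          have hnn : (0:ℝ) ≤ ((((d-1)+1:ℕ)):ℝ) ^ (-(1:ℝ)/3) := Real.rpow_nonneg (by positivity) _
          rw [h0]
          nlinarith [hnn]
  linarith

lemma cubeGap_nonneg (i : ℕ) : 0 ≤ cubeGap i := by
  unfold cubeGap; split <;> exact Real.rpow_nonneg (Nat.cast_nonneg i) _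

lemma cubeGap_noncube {i : ℕ} (h : ¬ ∃ n : ℕ, i = n ^ 3) :
    cubeGap i = (i:ℝ) ^ (-(2:ℝ)/3) := by
  unfold cubeGap; rw [if_neg h]

lemma cubeGap_noncube_le_one {i : ℕ} (hi : 1 ≤ i) (h : ¬ ∃ n : ℕ, i = n ^ 3) :
    cubeGap i ≤ 1 := by
  rw [cubeGap_noncube h]
  have : ((i:ℝ)) ^ (-(2:ℝ)/3) ≤ (1:ℝ) ^ (-(2:ℝ)/3) := by
    apply Real.rpow_le_rpow_of_nonpos (by norm_num) (by exact_mod_cast hi) (by norm_num)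
  simpa using this

/-- The number of perfect cubes in `[1, d]` is at most `d^(1/3)`. -/
lemma card_cubes_le (d : ℕ) :
    (((Finset.Icc 1 d).filter (fun i => ∃ n : ℕ, i = n ^ 3)).card : ℝ)
      ≤ (d:ℝ) ^ ((1:ℝ)/3) := by
  classical
  set m : ℕ := ⌊(d:ℝ) ^ ((1:ℝ)/3)⌋₊ with hm
  have hcard : ((Finset.Icc 1 d).filter (fun i => ∃ n : ℕ, i = n ^ 3)).card
      ≤ (Finset.Icc 1 m).card := by
    apply Finset.card_le_card_of_injOn
      (fun i => if h : ∃ n : ℕ, i = n ^ 3 then h.choose else 0)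
    · intro i hi
      simp only [Finset.coe_filter, Finset.mem_coe, Set.mem_setOf_eq, Finset.mem_filter, Finset.mem_Icc] at hi
      obtain ⟨⟨h1, h2⟩, hcube⟩ := hi
      simp only [dif_pos hcube]
      have hin : i = hcube.choose ^ 3 := hcube.choose_spec
      simp only [Finset.coe_Icc, Set.mem_Icc, Finset.mem_coe, Finset.mem_Icc]
      constructor
      · by_contra hn
        push_neg at hn
        interval_cases h : hcube.choose
        · omega
      · apply Nat.le_floor
        have h3 : ((hcube.choose : ℝ)) ^ (3:ℕ) ≤ (d:ℝ) := by
          rw [← Nat.cast_pow, ← hin]; exact_mod_cast h2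
        have := Real.rpow_le_rpow (by positivity) h3 (by norm_num : (0:ℝ) ≤ 1/3)
        calc (hcube.choose : ℝ) = (((hcube.choose:ℝ)) ^ (3:ℕ)) ^ ((1:ℝ)/3) := by
              rw [← Real.rpow_natCast (hcube.choose:ℝ) 3, ← Real.rpow_mul (by positivity)]
              norm_num
          _ ≤ (d:ℝ) ^ ((1:ℝ)/3) := this
    · intro i hi j hj hij
      simp only [Finset.mem_coe, Finset.mem_filter] at hi hj
      obtain ⟨-, hci⟩ := hi
      obtain ⟨-, hcj⟩ := hj
      simp only at hij
      rw [dif_pos hci, dif_pos hcj] at hij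
      rw [hci.choose_spec, hcj.choose_spec, hij]
  have : ((Finset.Icc 1 m).card : ℝ) = m := by
    rw [Nat.card_Icc]; simp
  calc (((Finset.Icc 1 d).filter (fun i => ∃ n : ℕ, i = n ^ 3)).card : ℝ)
      ≤ ((Finset.Icc 1 m).card : ℝ) := by exact_mod_cast hcard
    _ = m := this
    _ ≤ (d:ℝ) ^ ((1:ℝ)/3) := Nat.floor_le (by positivity)

lemma expInt (u : ℝ) : ∫ t in (0:ℝ)..u, Real.exp (-2*t) = (1 - Real.exp (-2*u))/2 := by
  have hderiv : ∀ t ∈ Set.uIcc (0:ℝ) u,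
      HasDerivAt (fun s => (1 - Real.exp (-2*s))/2) (Real.exp (-2*t)) t := by
    intro t _
    have h1 : HasDerivAt (fun s : ℝ => -2*s) (-2) t := by
      simpa using (hasDerivAt_id t).const_mul (-2:ℝ)
    have h2 : HasDerivAt (fun s : ℝ => Real.exp (-2*s)) (Real.exp (-2*t) * (-2)) t :=
      (Real.hasDerivAt_exp (-2*t)).comp t h1
    have h3 : HasDerivAt (fun s : ℝ => (1 - Real.exp (-2*s))/2)
        ((0 - Real.exp (-2*t) * (-2))/2) t := by
      exact ((hasDerivAt_const t (1:ℝ)).sub h2).div_const 2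
    convert h3 using 1
    ring
  have hcont : Continuous fun t : ℝ => Real.exp (-2*t) :=
    Real.continuous_exp.comp (continuous_const.mul continuous_id)
  rw [intervalIntegral.integral_eq_sub_of_hasDerivAt hderiv
    (hcont.intervalIntegrable 0 u)]
  norm_num

section RV
variable {Ω : Type*} [MeasurableSpace Ω] {μ : Measure Ω} [IsProbabilityMeasure μ]
  {X : Ω → ℝ}

lemma measurable_minExp (hX : IsExpRV μ 2 X) (u : ℝ) :
    Measurable (fun ω => min u (max (X ω) 0)) :=
  measurable_const.min (hX.1.max measurable_const)

lemma minExp_nonneg (u : ℝ) (hu : 0 ≤ u) (ω : Ω) : 0 ≤ min u (max (X ω) 0) :=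
  le_min hu (le_max_right _ _)

lemma minExp_le (u : ℝ) (ω : Ω) : min u (max (X ω) 0) ≤ u := min_le_left _ _

lemma memℒp_minExp (hX : IsExpRV μ 2 X) {u : ℝ} (hu : 0 ≤ u) (p : ENNReal) :
    MemLp (fun ω => min u (max (X ω) 0)) p μ := by
  refine MemLp.of_bound (measurable_minExp hX u).aestronglyMeasurable u ?_
  filter_upwards with ω
  rw [Real.norm_eq_abs, abs_of_nonneg (minExp_nonneg u hu ω)]
  exact minExp_le u ω

lemma integrable_minExp (hX : IsExpRV μ 2 X) {u : ℝ} (hu : 0 ≤ u) :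
    Integrable (fun ω => min u (max (X ω) 0)) μ :=
  memLp_one_iff_integrable.mp (memℒp_minExp hX hu 1)

lemma meas_minExp_gt (hX : IsExpRV μ 2 X) (u : ℝ) {t : ℝ} (ht : 0 < t) :
    μ {ω | t < min u (max (X ω) 0)}
      = if t < u then ENNReal.ofReal (Real.exp (-2*t)) else 0 := by
  split_ifs with h
  · have hset : {ω | t < min u (max (X ω) 0)} = {ω | X ω > t} := by
      ext ω
      simp only [Set.mem_setOf_eq, lt_min_iff, lt_max_iff, gt_iff_lt]
      constructor
      · rintro ⟨-, (hx | h0)⟩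
        · exact hx
        · linarith
      · intro hx; exact ⟨h, Or.inl hx⟩
    rw [hset, hX.2 t ht.le]
    norm_num
  · have hset : {ω | t < min u (max (X ω) 0)} = ∅ := by
      ext ω
      simp only [Set.mem_setOf_eq, lt_min_iff, Set.mem_empty_iff_false, iff_false, not_and]
      intro hc; exact absurd hc h
    rw [hset]
    simp

/-- Layer cake: the expectation of the truncated exponential. -/
lemma integral_minExp (hX : IsExpRV μ 2 X) {u : ℝ} (hu : 0 ≤ u) :
    ∫ ω, min u (max (X ω) 0) ∂μ = ∫ t in (0:ℝ)..u, Real.exp (-2*t) := by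
  rw [(integrable_minExp hX hu).integral_eq_integral_meas_lt
    (Filter.Eventually.of_forall (minExp_nonneg u hu))]
  have hcongr : ∀ t ∈ Set.Ioi (0:ℝ),
      (μ {a | t < min u (max (X a) 0)}).toReal
        = (Set.Iio u).indicator (fun t => Real.exp (-2*t)) t := by
    intro t ht
    rw [meas_minExp_gt hX u ht]
    by_cases h : t < u
    · rw [if_pos h, Set.indicator_of_mem (by exact h)]
      exact ENNReal.toReal_ofReal (Real.exp_nonneg _)
    · rw [if_neg h, Set.indicator_of_notMem (by exact h)]
      simp
  simp only [measureReal_def]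
  rw [setIntegral_congr_fun measurableSet_Ioi hcongr,
    setIntegral_indicator measurableSet_Iio, Set.Ioi_inter_Iio,
    ← MeasureTheory.integral_Ioc_eq_integral_Ioo,
    ← intervalIntegral.integral_of_le hu]

lemma integral_minExp_le_u (hX : IsExpRV μ 2 X) {u : ℝ} (hu : 0 ≤ u) :
    ∫ ω, min u (max (X ω) 0) ∂μ ≤ u := by
  rw [integral_minExp hX hu]
  have hcont : Continuous fun t : ℝ => Real.exp (-2*t) :=
    Real.continuous_exp.comp (continuous_const.mul continuous_id)
  calc ∫ t in (0:ℝ)..u, Real.exp (-2*t)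
      ≤ ∫ t in (0:ℝ)..u, (1:ℝ) := by
        apply intervalIntegral.integral_mono_on hu (hcont.intervalIntegrable 0 u)
          (intervalIntegrable_const)
        intro t ht
        rw [Set.mem_Icc] at ht
        have : -2*t ≤ 0 := by nlinarith [ht.1]
        simpa using Real.exp_le_one_iff.mpr this
    _ = u := by simp

lemma integral_minExp_le_half (hX : IsExpRV μ 2 X) {u : ℝ} (hu : 0 ≤ u) :
    ∫ ω, min u (max (X ω) 0) ∂μ ≤ 1/2 := by
  rw [integral_minExp hX hu, expInt]
  nlinarith [Real.exp_nonneg (-2*u)]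

lemma integral_minExp_ge (hX : IsExpRV μ 2 X) {u : ℝ} (hu : 0 ≤ u) (hu1 : u ≤ 1) :
    Real.exp (-2) * u ≤ ∫ ω, min u (max (X ω) 0) ∂μ := by
  rw [integral_minExp hX hu]
  have hcont : Continuous fun t : ℝ => Real.exp (-2*t) :=
    Real.continuous_exp.comp (continuous_const.mul continuous_id)
  calc Real.exp (-2) * u = ∫ t in (0:ℝ)..u, Real.exp (-2) := by simp [mul_comm]
    _ ≤ ∫ t in (0:ℝ)..u, Real.exp (-2*t) := by
        apply intervalIntegral.integral_mono_on hu intervalIntegrable_const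
          (hcont.intervalIntegrable 0 u)
        intro t ht
        rw [Set.mem_Icc] at ht
        apply Real.exp_le_exp.mpr
        nlinarith [ht.1, ht.2]

lemma integral_minExp_sq (hX : IsExpRV μ 2 X) {u : ℝ} (hu : 0 ≤ u) :
    ∫ ω, (min u (max (X ω) 0))^2 ∂μ
      = ∫ t in (0:ℝ)..(u^2), Real.exp (-2*Real.sqrt t) := by
  have hint : Integrable (fun ω => (min u (max (X ω) 0))^2) μ := by
    simpa [Pi.pow_apply] using (memℒp_minExp hX hu 2).integrable_sq
  have hiff : ∀ {t y : ℝ}, 0 < t → 0 ≤ y → (t < y^2 ↔ Real.sqrt t < y) := by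
    intro t y ht hy
    rcases eq_or_lt_of_le hy with rfl | hy'
    · constructor <;> intro h
      · nlinarith
      · nlinarith [Real.sqrt_nonneg t]
    · exact (Real.sqrt_lt' hy').symm
  rw [hint.integral_eq_integral_meas_lt
    (Filter.Eventually.of_forall (fun ω => sq_nonneg _))]
  have hcongr : ∀ t ∈ Set.Ioi (0:ℝ),
      (μ {a | t < (min u (max (X a) 0))^2}).toReal
        = (Set.Iio (u^2)).indicator (fun t => Real.exp (-2*Real.sqrt t)) t := by
    intro t ht
    have ht' : 0 < Real.sqrt t := Real.sqrt_pos.mpr ht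
    have hset : {a | t < (min u (max (X a) 0))^2}
        = {a | Real.sqrt t < min u (max (X a) 0)} := by
      ext a
      simp only [Set.mem_setOf_eq]
      exact hiff ht (minExp_nonneg u hu a)
    rw [hset, meas_minExp_gt hX u ht']
    by_cases h : t < u^2
    · have h' : Real.sqrt t < u := (hiff ht hu).mp h
      rw [if_pos h', Set.indicator_of_mem (by exact h)]
      exact ENNReal.toReal_ofReal (Real.exp_nonneg _)
    · have h' : ¬ Real.sqrt t < u := fun hc => h ((hiff ht hu).mpr hc)
      rw [if_neg h', Set.indicator_of_notMem (by exact h)]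
      simp
  simp only [measureReal_def]
  rw [setIntegral_congr_fun measurableSet_Ioi hcongr,
    setIntegral_indicator measurableSet_Iio, Set.Ioi_inter_Iio,
    ← MeasureTheory.integral_Ioc_eq_integral_Ioo,
    ← intervalIntegral.integral_of_le (by positivity : (0:ℝ) ≤ u^2)]

lemma expSqrtInt_le {A : ℝ} (hA : 0 ≤ A) :
    ∫ t in (0:ℝ)..A, Real.exp (-2*Real.sqrt t) ≤ 5/2 := by
  have hcont : Continuous fun t : ℝ => Real.exp (-2*Real.sqrt t) :=
    Real.continuous_exp.comp (continuous_const.mul Real.continuous_sqrt)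
  have hone : ∀ B : ℝ, 0 ≤ B → ∫ t in (0:ℝ)..B, Real.exp (-2*Real.sqrt t) ≤ B := by
    intro B hB
    calc ∫ t in (0:ℝ)..B, Real.exp (-2*Real.sqrt t)
        ≤ ∫ t in (0:ℝ)..B, (1:ℝ) := by
          apply intervalIntegral.integral_mono_on hB (hcont.intervalIntegrable 0 B)
            intervalIntegrable_const
          intro t ht
          rw [Set.mem_Icc] at ht
          have : -2*Real.sqrt t ≤ 0 := by nlinarith [Real.sqrt_nonneg t]
          simpa using Real.exp_le_one_iff.mpr this
      _ = B := by simp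
  rcases le_or_gt A 1 with h1 | h1
  · linarith [hone A hA]
  · have hsplit : ∫ t in (0:ℝ)..A, Real.exp (-2*Real.sqrt t)
        = (∫ t in (0:ℝ)..1, Real.exp (-2*Real.sqrt t))
          + ∫ t in (1:ℝ)..A, Real.exp (-2*Real.sqrt t) := by
      rw [intervalIntegral.integral_add_adjacent_intervals
        (hcont.intervalIntegrable 0 1) (hcont.intervalIntegrable 1 A)]
    rw [hsplit]
    have h2 : ∫ t in (1:ℝ)..A, Real.exp (-2*Real.sqrt t) ≤ 3/2 := by
      have hptwise : ∀ t ∈ Set.Icc (1:ℝ) A,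
          Real.exp (-2*Real.sqrt t) ≤ (3/4) * t ^ (-(3:ℝ)/2) := by
        intro t ht
        rw [Set.mem_Icc] at ht
        have ht0 : (0:ℝ) < t := by linarith
        have hs : Real.sqrt t = t ^ ((1:ℝ)/2) := Real.sqrt_eq_rpow t
        have hs3 : (Real.sqrt t)^3 = t ^ ((3:ℝ)/2) := by
          rw [hs, ← Real.rpow_natCast (t ^ ((1:ℝ)/2)) 3, ← Real.rpow_mul ht0.le]
          norm_num
        have hpow : (2*Real.sqrt t)^(3:ℕ)/(Nat.factorial 3 : ℝ)
            ≤ Real.exp (2*Real.sqrt t) :=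
          Real.pow_div_factorial_le_exp (x := 2*Real.sqrt t) (by positivity) 3
        have h83 : (2*Real.sqrt t)^(3:ℕ) = 8 * t ^ ((3:ℝ)/2) := by
          rw [mul_pow, hs3]; norm_num
        have hfac : (Nat.factorial 3 : ℝ) = 6 := by norm_num [Nat.factorial]
        rw [h83, hfac] at hpow
        have hexp : (4/3) * t ^ ((3:ℝ)/2) ≤ Real.exp (2*Real.sqrt t) := by linarith
        have htr : (0:ℝ) < t ^ ((3:ℝ)/2) := Real.rpow_pos_of_pos ht0 _
        have hneg : Real.exp (-2*Real.sqrt t) = (Real.exp (2*Real.sqrt t))⁻¹ := by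
          rw [← Real.exp_neg]; ring_nf
        rw [hneg]
        have : (Real.exp (2*Real.sqrt t))⁻¹ ≤ ((4/3) * t ^ ((3:ℝ)/2))⁻¹ :=
          inv_anti₀ (by positivity) hexp
        apply this.trans
        have hne : t ^ (-(3:ℝ)/2) = (t ^ ((3:ℝ)/2))⁻¹ := by
          rw [← Real.rpow_neg ht0.le]; norm_num
        rw [hne, mul_inv]
        norm_num
      calc ∫ t in (1:ℝ)..A, Real.exp (-2*Real.sqrt t)
          ≤ ∫ t in (1:ℝ)..A, (3/4) * t ^ (-(3:ℝ)/2) := by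
            apply intervalIntegral.integral_mono_on h1.le
              (hcont.intervalIntegrable 1 A)
              (((intervalIntegral.intervalIntegrable_rpow
                (Or.inr (by simp [Set.uIcc_of_le h1.le]))).const_mul _))
              hptwise
        _ = (3/4) * ((A ^ (-(3:ℝ)/2 + 1) - 1 ^ (-(3:ℝ)/2 + 1)) / (-(3:ℝ)/2 + 1)) := by
            rw [intervalIntegral.integral_const_mul, integral_rpow
              (Or.inr ⟨by norm_num, by simp [Set.uIcc_of_le h1.le]⟩)]
        _ ≤ 3/2 := by
            have : (0:ℝ) ≤ A ^ (-(3:ℝ)/2 + 1) := Real.rpow_nonneg (by linarith) _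
            rw [Real.one_rpow]
            norm_num
            nlinarith [this]
    linarith [hone 1 (by norm_num)]

lemma integral_minExp_sq_le (hX : IsExpRV μ 2 X) {u : ℝ} (hu : 0 ≤ u) :
    ∫ ω, (min u (max (X ω) 0))^2 ∂μ ≤ min (u^2) (5/2) := by
  rw [integral_minExp_sq hX hu]
  apply le_min
  · have hcont : Continuous fun t : ℝ => Real.exp (-2*Real.sqrt t) :=
      Real.continuous_exp.comp (continuous_const.mul Real.continuous_sqrt)
    calc ∫ t in (0:ℝ)..(u^2), Real.exp (-2*Real.sqrt t)
        ≤ ∫ t in (0:ℝ)..(u^2), (1:ℝ) := by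
          apply intervalIntegral.integral_mono_on (by positivity)
            (hcont.intervalIntegrable 0 (u^2)) intervalIntegrable_const
          intro t ht
          rw [Set.mem_Icc] at ht
          have : -2*Real.sqrt t ≤ 0 := by nlinarith [Real.sqrt_nonneg t]
          simpa using Real.exp_le_one_iff.mpr this
      _ = u^2 := by simp
  · exact expSqrtInt_le (by positivity)

end RV

set_option maxHeartbeats 2000000 in
theorem cubeGap_min_exponential_sums_asymptotics
    {Ω : Type*} [MeasurableSpace Ω] (μ : Measure Ω) [IsProbabilityMeasure μ]
    (V : ℕ → Ω → ℝ)
    (hindep : iIndepFun V μ)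
    (hexp : ∀ i, IsExpRV μ 2 (V i)) :
    ∀ᵐ ω ∂μ,
      (∃ c₁ c₂ : ℝ, 0 < c₁ ∧ c₁ < c₂ ∧ ∀ᶠ d : ℕ in atTop,
        c₁ * (d : ℝ) ^ ((1:ℝ)/3) ≤ ∑ i ∈ Finset.Icc 1 d, min (cubeGap i) (V i ω) ∧
        (∑ i ∈ Finset.Icc 1 d, min (cubeGap i) (V i ω)) ≤ c₂ * (d : ℝ) ^ ((1:ℝ)/3)) ∧
      liminf (fun d : ℕ =>
          (1 / (Real.sqrt d * Real.log d)) *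
            ∑ i ∈ Finset.Icc 1 d, min (cubeGap i) (V i ω))
        atTop = 0 := by
  classical
  -- the truncated variables
  set Y : ℕ → Ω → ℝ := fun i ω => min (cubeGap i) (max (V i ω) 0) with hYdef
  have hYmem : ∀ i, MemLp (Y i) 2 μ := fun i => memℒp_minExp (hexp i) (cubeGap_nonneg i) 2
  have hYint : ∀ i, Integrable (Y i) μ := fun i => integrable_minExp (hexp i) (cubeGap_nonneg i)
  have hYnonneg : ∀ i ω, 0 ≤ Y i ω := fun i ω => le_min (cubeGap_nonneg i) (le_max_right _ _)
  have hYindep : iIndepFun Y μ := by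
    exact hindep.comp (fun i (x : ℝ) => min (cubeGap i) (max x 0))
      (fun i => measurable_const.min (measurable_id.max measurable_const))
  -- expectation of partial sums
  set ES : ℕ → ℝ := fun d => ∑ i ∈ Finset.Icc 1 d, ∫ ω, Y i ω ∂μ with hESdef
  have hESint : ∀ d, μ[∑ i ∈ Finset.Icc 1 d, Y i] = ES d := by
    intro d
    have h1 : μ[∑ i ∈ Finset.Icc 1 d, Y i] = ∫ ω, ∑ i ∈ Finset.Icc 1 d, Y i ω ∂μ := by
      congr 1
      ext ω
      exact Finset.sum_apply _ _ _
    rw [h1, integral_finset_sum _ (fun i _ => hYint i)]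
  have hpow_sq : ∀ i : ℕ, (((i:ℝ)) ^ (-(2:ℝ)/3))^2 = ((i:ℝ)) ^ (-(4:ℝ)/3) := by
    intro i
    rw [← Real.rpow_natCast (((i:ℝ)) ^ (-(2:ℝ)/3)) 2, ← Real.rpow_mul (Nat.cast_nonneg i)]
    norm_num
  have hrpow_mono : ∀ {a b : ℝ}, 0 ≤ a → a ≤ b → a ^ ((1:ℝ)/3) ≤ b ^ ((1:ℝ)/3) :=
    fun ha hab => Real.rpow_le_rpow ha hab (by norm_num)
  have hc6 : ∀ n : ℕ, (((n^6 : ℕ)):ℝ) ^ ((1:ℝ)/3) = ((n:ℕ):ℝ)^2 := by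
    intro n
    push_cast
    rw [← Real.rpow_natCast ((n:ℝ)) 6, ← Real.rpow_mul (Nat.cast_nonneg n),
      ← Real.rpow_natCast ((n:ℝ)) 2]
    norm_num
  -- upper bound for expectations
  have hES_le : ∀ d : ℕ, ES d ≤ 4 * (d:ℝ) ^ ((1:ℝ)/3) := by
    intro d
    simp only [hESdef]
    have hsplit := Finset.sum_filter_add_sum_filter_not (Finset.Icc 1 d)
      (fun i => ∃ n : ℕ, i = n ^ 3) (fun i => ∫ ω, Y i ω ∂μ)
    rw [← hsplit]
    have hcube : ∑ i ∈ (Finset.Icc 1 d).filter (fun i => ∃ n : ℕ, i = n ^ 3),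
        (∫ ω, Y i ω ∂μ)
        ≤ (1/2) * (d:ℝ) ^ ((1:ℝ)/3) := by
      calc ∑ i ∈ (Finset.Icc 1 d).filter (fun i => ∃ n : ℕ, i = n ^ 3), (∫ ω, Y i ω ∂μ)
          ≤ ∑ i ∈ (Finset.Icc 1 d).filter (fun i => ∃ n : ℕ, i = n ^ 3), (1/2 : ℝ) :=
            Finset.sum_le_sum (fun i _ => integral_minExp_le_half (hexp i) (cubeGap_nonneg i))
        _ = ((Finset.Icc 1 d).filter (fun i => ∃ n : ℕ, i = n ^ 3)).card * (1/2 : ℝ) := by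
            rw [Finset.sum_const, nsmul_eq_mul]
        _ ≤ (d:ℝ) ^ ((1:ℝ)/3) * (1/2) := by
            apply mul_le_mul_of_nonneg_right (card_cubes_le d) (by norm_num)
        _ = (1/2) * (d:ℝ) ^ ((1:ℝ)/3) := by ring
    have hnoncube : ∑ i ∈ (Finset.Icc 1 d).filter (fun i => ¬ ∃ n : ℕ, i = n ^ 3),
        (∫ ω, Y i ω ∂μ) ≤ 3 * (d:ℝ) ^ ((1:ℝ)/3) := by
      calc ∑ i ∈ (Finset.Icc 1 d).filter (fun i => ¬ ∃ n : ℕ, i = n ^ 3), (∫ ω, Y i ω ∂μ)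
          ≤ ∑ i ∈ (Finset.Icc 1 d).filter (fun i => ¬ ∃ n : ℕ, i = n ^ 3),
              ((i:ℝ)) ^ (-(2:ℝ)/3) := by
            apply Finset.sum_le_sum
            intro i hi
            simp only [Finset.mem_filter] at hi
            exact (integral_minExp_le_u (hexp i) (cubeGap_nonneg i)).trans
              (le_of_eq (cubeGap_noncube hi.2))
        _ ≤ ∑ i ∈ Finset.Icc 1 d, ((i:ℝ)) ^ (-(2:ℝ)/3) := by
            apply Finset.sum_le_sum_of_subset_of_nonneg (Finset.filter_subset _ _)
            intro i _ _
            exact Real.rpow_nonneg (Nat.cast_nonneg i) _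
        _ ≤ 3 * (d:ℝ) ^ ((1:ℝ)/3) := sum_inv23_le d
    have h0 : (0:ℝ) ≤ (d:ℝ) ^ ((1:ℝ)/3) := Real.rpow_nonneg (Nat.cast_nonneg d) _
    linarith
  -- lower bound for expectations
  have hES_ge : ∀ d : ℕ, 27 ≤ d → Real.exp (-2) * (d:ℝ) ^ ((1:ℝ)/3) ≤ ES d := by
    intro d hd
    simp only [hESdef]
    have hsplit := Finset.sum_filter_add_sum_filter_not (Finset.Icc 1 d)
      (fun i => ∃ n : ℕ, i = n ^ 3) (fun i => ∫ ω, Y i ω ∂μ)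
    rw [← hsplit]
    have hcube_nn : (0:ℝ) ≤ ∑ i ∈ (Finset.Icc 1 d).filter (fun i => ∃ n : ℕ, i = n ^ 3),
        (∫ ω, Y i ω ∂μ) := by
      apply Finset.sum_nonneg
      intro i _
      exact integral_nonneg (fun ω => hYnonneg i ω)
    have hnoncube : Real.exp (-2) *
        (∑ i ∈ (Finset.Icc 1 d).filter (fun i => ¬ ∃ n : ℕ, i = n ^ 3),
          ((i:ℝ)) ^ (-(2:ℝ)/3))
        ≤ ∑ i ∈ (Finset.Icc 1 d).filter (fun i => ¬ ∃ n : ℕ, i = n ^ 3),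
          (∫ ω, Y i ω ∂μ) := by
      rw [Finset.mul_sum]
      apply Finset.sum_le_sum
      intro i hi
      simp only [Finset.mem_filter, Finset.mem_Icc] at hi
      calc Real.exp (-2) * ((i:ℝ)) ^ (-(2:ℝ)/3)
          = Real.exp (-2) * cubeGap i := by rw [cubeGap_noncube hi.2]
        _ ≤ ∫ ω, Y i ω ∂μ := integral_minExp_ge (hexp i) (cubeGap_nonneg i)
            (cubeGap_noncube_le_one hi.1.1 hi.2)
    have hsum_noncube : (3 * (((d:ℝ)+1) ^ ((1:ℝ)/3) - 1)) - (d:ℝ) ^ ((1:ℝ)/3)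
        ≤ ∑ i ∈ (Finset.Icc 1 d).filter (fun i => ¬ ∃ n : ℕ, i = n ^ 3),
          ((i:ℝ)) ^ (-(2:ℝ)/3) := by
      have heq := Finset.sum_filter_add_sum_filter_not (Finset.Icc 1 d)
        (fun i => ∃ n : ℕ, i = n ^ 3) (fun i => ((i:ℝ)) ^ (-(2:ℝ)/3))
      have hcube_small : ∑ i ∈ (Finset.Icc 1 d).filter (fun i => ∃ n : ℕ, i = n ^ 3),
          ((i:ℝ)) ^ (-(2:ℝ)/3) ≤ (d:ℝ) ^ ((1:ℝ)/3) := by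
        calc ∑ i ∈ (Finset.Icc 1 d).filter (fun i => ∃ n : ℕ, i = n ^ 3),
            ((i:ℝ)) ^ (-(2:ℝ)/3)
            ≤ ∑ i ∈ (Finset.Icc 1 d).filter (fun i => ∃ n : ℕ, i = n ^ 3), (1:ℝ) := by
              apply Finset.sum_le_sum
              intro i hi
              simp only [Finset.mem_filter, Finset.mem_Icc] at hi
              have h1 : (1:ℝ) ≤ (i:ℝ) := by exact_mod_cast hi.1.1
              have : ((i:ℝ)) ^ (-(2:ℝ)/3) ≤ (1:ℝ) ^ (-(2:ℝ)/3) :=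
                Real.rpow_le_rpow_of_nonpos (by norm_num) h1 (by norm_num)
              simpa using this
          _ = ((Finset.Icc 1 d).filter (fun i => ∃ n : ℕ, i = n ^ 3)).card := by
              rw [Finset.sum_const, nsmul_eq_mul, mul_one]
          _ ≤ (d:ℝ) ^ ((1:ℝ)/3) := card_cubes_le d
      have hge := sum_inv23_ge d
      linarith
    have h27 : (3:ℝ) ≤ (d:ℝ) ^ ((1:ℝ)/3) := by
      have h1 : ((27:ℕ):ℝ) ^ ((1:ℝ)/3) ≤ (d:ℝ) ^ ((1:ℝ)/3) :=
        hrpow_mono (by norm_num) (by exact_mod_cast hd)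
      have h2 : ((27:ℕ):ℝ) ^ ((1:ℝ)/3) = 3 := by
        rw [show ((27:ℕ):ℝ) = (3:ℝ)^(3:ℕ) by norm_num,
          ← Real.rpow_natCast (3:ℝ) 3, ← Real.rpow_mul (by norm_num)]
        norm_num
      linarith
    have hd1 : (d:ℝ) ^ ((1:ℝ)/3) ≤ ((d:ℝ)+1) ^ ((1:ℝ)/3) :=
      hrpow_mono (Nat.cast_nonneg d) (by linarith)
    have hexp_pos : (0:ℝ) < Real.exp (-2) := Real.exp_pos _
    have step : Real.exp (-2) * (2 * (d:ℝ) ^ ((1:ℝ)/3) - 3)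
        ≤ ∑ i ∈ (Finset.Icc 1 d).filter (fun i => ¬ ∃ n : ℕ, i = n ^ 3),
          (∫ ω, Y i ω ∂μ) := by
      apply le_trans _ hnoncube
      apply mul_le_mul_of_nonneg_left _ hexp_pos.le
      linarith
    have hfin : Real.exp (-2) * (d:ℝ) ^ ((1:ℝ)/3)
        ≤ Real.exp (-2) * (2 * (d:ℝ) ^ ((1:ℝ)/3) - 3) := by
      apply mul_le_mul_of_nonneg_left _ hexp_pos.le
      linarith
    linarith
  -- variance bounds
  have hVar : ∀ i, variance (Y i) μ ≤ min ((cubeGap i)^2) (5/2) := by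
    intro i
    have h2 := integral_minExp_sq_le (hexp i) (cubeGap_nonneg i)
    have hvd := variance_eq_sub (hYmem i)
    have heq : μ[(Y i) ^ 2] = ∫ ω, (min (cubeGap i) (max (V i ω) 0))^2 ∂μ := rfl
    rw [hvd, heq]
    nlinarith [sq_nonneg (μ[Y i]), h2]
  have hVarS : ∀ d : ℕ, 1 ≤ d →
      variance (∑ i ∈ Finset.Icc 1 d, Y i) μ ≤ 7 * (d:ℝ) ^ ((1:ℝ)/3) := by
    intro d hd
    have hsum : variance (∑ i ∈ Finset.Icc 1 d, Y i) μ
        = ∑ i ∈ Finset.Icc 1 d, variance (Y i) μ := by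
      apply IndepFun.variance_sum (fun i _ => hYmem i)
      intro i _ j _ hij
      exact hYindep.indepFun hij
    rw [hsum]
    have hsplit := Finset.sum_filter_add_sum_filter_not (Finset.Icc 1 d)
      (fun i => ∃ n : ℕ, i = n ^ 3) (fun i => variance (Y i) μ)
    rw [← hsplit]
    have hcube : ∑ i ∈ (Finset.Icc 1 d).filter (fun i => ∃ n : ℕ, i = n ^ 3),
        variance (Y i) μ ≤ (5/2) * (d:ℝ) ^ ((1:ℝ)/3) := by
      calc ∑ i ∈ (Finset.Icc 1 d).filter (fun i => ∃ n : ℕ, i = n ^ 3), variance (Y i) μ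
          ≤ ∑ i ∈ (Finset.Icc 1 d).filter (fun i => ∃ n : ℕ, i = n ^ 3), (5/2 : ℝ) :=
            Finset.sum_le_sum (fun i _ => (hVar i).trans (min_le_right _ _))
        _ = ((Finset.Icc 1 d).filter (fun i => ∃ n : ℕ, i = n ^ 3)).card * (5/2 : ℝ) := by
            rw [Finset.sum_const, nsmul_eq_mul]
        _ ≤ (d:ℝ) ^ ((1:ℝ)/3) * (5/2) :=
            mul_le_mul_of_nonneg_right (card_cubes_le d) (by norm_num)
        _ = (5/2) * (d:ℝ) ^ ((1:ℝ)/3) := by ring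
    have hnoncube : ∑ i ∈ (Finset.Icc 1 d).filter (fun i => ¬ ∃ n : ℕ, i = n ^ 3),
        variance (Y i) μ ≤ 4 := by
      calc ∑ i ∈ (Finset.Icc 1 d).filter (fun i => ¬ ∃ n : ℕ, i = n ^ 3), variance (Y i) μ
          ≤ ∑ i ∈ (Finset.Icc 1 d).filter (fun i => ¬ ∃ n : ℕ, i = n ^ 3),
            ((i:ℝ)) ^ (-(4:ℝ)/3) := by
            apply Finset.sum_le_sum
            intro i hi
            simp only [Finset.mem_filter] at hi
            have := (hVar i).trans (min_le_left _ _)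
            rwa [cubeGap_noncube hi.2, hpow_sq i] at this
        _ ≤ ∑ i ∈ Finset.Icc 1 d, ((i:ℝ)) ^ (-(4:ℝ)/3) := by
            apply Finset.sum_le_sum_of_subset_of_nonneg (Finset.filter_subset _ _)
            intro i _ _
            exact Real.rpow_nonneg (Nat.cast_nonneg i) _
        _ ≤ 4 := sum_inv43_le d
    have h1 : (1:ℝ) ≤ (d:ℝ) ^ ((1:ℝ)/3) := by
      have := hrpow_mono (by norm_num : (0:ℝ) ≤ 1) (by exact_mod_cast hd : (1:ℝ) ≤ (d:ℝ))
      simpa using this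
    linarith
  -- Chebyshev + Borel–Cantelli
  set ε : ℝ := Real.exp (-2) / 2 with hεdef
  have hε0 : 0 < ε := by positivity
  set s : ℕ → Set Ω := fun k =>
    {ω | ε * (((k+1:ℕ)):ℝ)^2
      ≤ |(∑ i ∈ Finset.Icc 1 ((k+1)^6), Y i) ω - μ[∑ i ∈ Finset.Icc 1 ((k+1)^6), Y i]|}
    with hsdef
  have hcheb_k : ∀ k : ℕ, μ (s k) ≤ ENNReal.ofReal ((7/ε^2) / (((k+1:ℕ)):ℝ)^2) := by
    intro k
    have hc : (0:ℝ) < ε * (((k+1:ℕ)):ℝ)^2 := by positivity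
    have h := meas_ge_le_variance_div_sq (μ := μ)
      (memLp_finsetSum' _ (fun i (_ : i ∈ Finset.Icc 1 ((k+1)^6)) => hYmem i)) hc
    refine h.trans (ENNReal.ofReal_le_ofReal ?_)
    have hV := hVarS ((k+1)^6) (Nat.one_le_pow 6 (k+1) (by omega))
    rw [hc6 (k+1)] at hV
    have hk1 : (0:ℝ) < (((k+1:ℕ)):ℝ)^2 := by positivity
    calc variance (∑ i ∈ Finset.Icc 1 ((k+1)^6), Y i) μ / (ε * (((k+1:ℕ)):ℝ)^2)^2
        ≤ (7 * (((k+1:ℕ)):ℝ)^2) / (ε * (((k+1:ℕ)):ℝ)^2)^2 := by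
          gcongr
      _ = (7/ε^2) / (((k+1:ℕ)):ℝ)^2 := by
          field_simp
  have hsum_ne_top : (∑' k, μ (s k)) ≠ ⊤ := by
    have h0 : Summable (fun n : ℕ => 1 / (n:ℝ)^2) :=
      Real.summable_one_div_nat_pow.mpr one_lt_two
    have h1 : Summable (fun n : ℕ => 1 / (((n+1:ℕ)):ℝ)^2) :=
      (summable_nat_add_iff (f := fun n : ℕ => 1 / (n:ℝ)^2) 1).mpr h0
    have hsummable : Summable (fun k : ℕ => (7/ε^2) / (((k+1:ℕ)):ℝ)^2) := by
      have := h1.mul_left (7/ε^2)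
      simpa only [mul_one_div] using this
    have hle : (∑' k, μ (s k))
        ≤ ∑' k, ENNReal.ofReal ((7/ε^2) / (((k+1:ℕ)):ℝ)^2) :=
      ENNReal.tsum_le_tsum hcheb_k
    have heq : (∑' k : ℕ, ENNReal.ofReal ((7/ε^2) / (((k+1:ℕ)):ℝ)^2))
        = ENNReal.ofReal (∑' k : ℕ, (7/ε^2) / (((k+1:ℕ)):ℝ)^2) :=
      (ENNReal.ofReal_tsum_of_nonneg (fun k => by positivity) hsummable).symm
    exact ((hle.trans_eq heq).trans_lt ENNReal.ofReal_lt_top).ne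
  have hBC := MeasureTheory.ae_eventually_notMem hsum_ne_top
  have hVpos : ∀ᵐ ω ∂μ, ∀ i, 0 ≤ V i ω := by
    rw [ae_all_iff]
    intro i
    have h1 : μ {ω | V i ω > 0} = 1 := by
      rw [(hexp i).2 0 le_rfl]
      norm_num
    have hmeas : MeasurableSet {ω | V i ω > 0} :=
      measurableSet_lt measurable_const (hexp i).1
    have hcompl : μ {ω | V i ω > 0}ᶜ = 0 := by
      rw [measure_compl hmeas (by simp), h1]
      simp
    refine measure_mono_null ?_ hcompl
    intro ω hω
    simp only [Set.mem_compl_iff, Set.mem_setOf_eq, not_lt] at hω ⊢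
    linarith [not_le.mp hω]
  filter_upwards [hBC, hVpos] with ω hch hpos
  -- pointwise phase
  set T : ℕ → ℝ := fun d => ∑ i ∈ Finset.Icc 1 d, Y i ω with hTdef
  have hgoal_sum : ∀ d, (∑ i ∈ Finset.Icc 1 d, min (cubeGap i) (V i ω)) = T d := by
    intro d
    apply Finset.sum_congr rfl
    intro i _
    simp only [hTdef, hYdef]
    rw [max_eq_left (hpos i)]
  have hTmono : ∀ a b : ℕ, a ≤ b → T a ≤ T b := by
    intro a b hab
    apply Finset.sum_le_sum_of_subset_of_nonneg (Finset.Icc_subset_Icc_right hab)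
    intro i _ _
    exact hYnonneg i ω
  have hTnonneg : ∀ d, 0 ≤ T d := fun d => Finset.sum_nonneg fun i _ => hYnonneg i ω
  obtain ⟨K, hK⟩ := eventually_atTop.mp hch
  have hdev : ∀ k, K ≤ k →
      |T ((k+1)^6) - ES ((k+1)^6)| < ε * (((k+1:ℕ)):ℝ)^2 := by
    intro k hk
    have h := hK k hk
    simp only [hsdef, Set.mem_setOf_eq, not_le] at h
    have hTapp : (∑ i ∈ Finset.Icc 1 ((k+1)^6), Y i) ω = T ((k+1)^6) :=
      Finset.sum_apply _ _ _
    rw [hTapp, hESint ((k+1)^6)] at h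
    exact h
  -- the main eventual bounds
  have hmain : ∀ᶠ d : ℕ in atTop,
      (Real.exp (-2) / 8) * (d:ℝ) ^ ((1:ℝ)/3) ≤ T d ∧ T d ≤ 20 * (d:ℝ) ^ ((1:ℝ)/3) := by
    rw [eventually_atTop]
    refine ⟨(max (K+1) 3)^6, fun d hd => ?_⟩
    set K₁ := max (K+1) 3 with hK₁
    have hK₁6 : K₁ ≤ K₁^6 := Nat.le_self_pow (by norm_num) K₁
    have hK₁d : K₁ ≤ d := le_trans hK₁6 hd
    obtain ⟨k, hkK₁, hk6, hdlt⟩ : ∃ k : ℕ, K₁ ≤ k ∧ k^6 ≤ d ∧ d < (k+1)^6 := by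
      refine ⟨Nat.findGreatest (fun n => n^6 ≤ d) d,
        Nat.le_findGreatest (P := fun n => n^6 ≤ d) hK₁d hd,
        Nat.findGreatest_spec (P := fun n => n^6 ≤ d) hK₁d hd, ?_⟩
      by_contra hcon
      push_neg at hcon
      have h2 : (Nat.findGreatest (fun n => n^6 ≤ d) d) + 1 ≤ d :=
        le_trans (Nat.le_self_pow (by norm_num) _) hcon
      have h3 := Nat.le_findGreatest (P := fun n => n^6 ≤ d) h2 hcon
      omega
    have hk3 : 3 ≤ k := le_trans (le_max_right _ _) hkK₁
    have hkK : K + 1 ≤ k := le_trans (le_max_left _ _) hkK₁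
    have hdev1 := hdev (k-1) (by omega)
    have hkk : k - 1 + 1 = k := by omega
    rw [hkk] at hdev1
    have hdev2 := hdev k (by omega)
    have hES_low : Real.exp (-2) * ((k:ℕ):ℝ)^2 ≤ ES (k^6) := by
      have h27 : 27 ≤ k^6 := by
        calc 27 ≤ 3^6 := by norm_num
          _ ≤ k^6 := Nat.pow_le_pow_left hk3 6
      have := hES_ge (k^6) h27
      rwa [hc6 k] at this
    have hES_hi : ES ((k+1)^6) ≤ 4 * (((k+1:ℕ)):ℝ)^2 := by
      have := hES_le ((k+1)^6)
      rwa [hc6 (k+1)] at this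
    have habs1 := abs_lt.mp hdev1
    have habs2 := abs_lt.mp hdev2
    have hdr_hi : ((d:ℝ)) ^ ((1:ℝ)/3) ≤ (((k+1:ℕ)):ℝ)^2 := by
      have h1 : ((d:ℝ)) ≤ ((((k+1)^6 : ℕ)):ℝ) := by exact_mod_cast hdlt.le
      calc ((d:ℝ))^((1:ℝ)/3) ≤ ((((k+1)^6:ℕ)):ℝ)^((1:ℝ)/3) :=
            hrpow_mono (Nat.cast_nonneg d) h1
        _ = _ := hc6 (k+1)
    have hdr_lo : (((k:ℕ)):ℝ)^2 ≤ ((d:ℝ)) ^ ((1:ℝ)/3) := by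
      rw [← hc6 k]
      exact hrpow_mono (by positivity) (by exact_mod_cast hk6)
    have hk4 : (((k+1:ℕ)):ℝ)^2 ≤ 4 * (((k:ℕ)):ℝ)^2 := by
      have h3 : (3:ℝ) ≤ ((k:ℕ):ℝ) := by exact_mod_cast hk3
      push_cast
      nlinarith
    have hexp_pos : (0:ℝ) < Real.exp (-2) := Real.exp_pos _
    constructor
    · -- lower bound
      have hTd : T (k^6) ≤ T d := hTmono _ _ hk6
      have hlow : ε * (((k:ℕ)):ℝ)^2 ≤ T d := by
        have h1 : ES (k^6) - ε * (((k:ℕ)):ℝ)^2 < T (k^6) := by linarith [habs1.1]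
        have : ε * (((k:ℕ)):ℝ)^2 = Real.exp (-2) * ((k:ℕ):ℝ)^2 - ε * ((k:ℕ):ℝ)^2 := by
          rw [hεdef]; ring
        nlinarith [hES_low]
      calc (Real.exp (-2) / 8) * (d:ℝ) ^ ((1:ℝ)/3)
          ≤ (Real.exp (-2) / 8) * (((k+1:ℕ)):ℝ)^2 :=
            mul_le_mul_of_nonneg_left hdr_hi (by positivity)
        _ ≤ (Real.exp (-2) / 8) * (4 * (((k:ℕ)):ℝ)^2) :=
            mul_le_mul_of_nonneg_left hk4 (by positivity)
        _ = ε * (((k:ℕ)):ℝ)^2 := by rw [hεdef]; ring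
        _ ≤ T d := hlow
    · -- upper bound
      have hTd : T d ≤ T ((k+1)^6) := hTmono _ _ hdlt.le
      have hup : T ((k+1)^6) ≤ 5 * (((k+1:ℕ)):ℝ)^2 := by
        have h1 : T ((k+1)^6) < ES ((k+1)^6) + ε * (((k+1:ℕ)):ℝ)^2 := by
          linarith [habs2.2]
        have hεhalf : ε ≤ 1 := by
          rw [hεdef]
          have : Real.exp (-2) < 1 := by
            rw [← Real.exp_zero]
            exact Real.exp_lt_exp.mpr (by norm_num)
          linarith
        nlinarith [hES_hi, sq_nonneg (((k+1:ℕ)):ℝ)]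
      calc T d ≤ 5 * (((k+1:ℕ)):ℝ)^2 := le_trans hTd hup
        _ ≤ 5 * (4 * (((k:ℕ)):ℝ)^2) := mul_le_mul_of_nonneg_left hk4 (by norm_num)
        _ = 20 * (((k:ℕ)):ℝ)^2 := by ring
        _ ≤ 20 * (d:ℝ) ^ ((1:ℝ)/3) := mul_le_mul_of_nonneg_left hdr_lo (by norm_num)
  constructor
  · refine ⟨Real.exp (-2) / 8, 20, by positivity, ?_, ?_⟩
    · have : Real.exp (-2) < 1 := by
        rw [← Real.exp_zero]
        exact Real.exp_lt_exp.mpr (by norm_num)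
      linarith
    · filter_upwards [hmain] with d hd
      rw [hgoal_sum d]
      exact hd
  · -- liminf part
    have hub : ∀ᶠ d : ℕ in atTop,
        (∑ i ∈ Finset.Icc 1 d, min (cubeGap i) (V i ω)) ≤ 20 * (d:ℝ) ^ ((1:ℝ)/3) := by
      filter_upwards [hmain] with d hd
      rw [hgoal_sum d]
      exact hd.2
    have hnn : ∀ d : ℕ, 0 ≤ ∑ i ∈ Finset.Icc 1 d, min (cubeGap i) (V i ω) := by
      intro d
      apply Finset.sum_nonneg
      intro i _
      exact le_min (cubeGap_nonneg i) (hpos i)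
    have htendH : Tendsto (fun d : ℕ => 20 * (d:ℝ) ^ (-(1/6:ℝ)) * (Real.log d)⁻¹)
        atTop (nhds 0) := by
      have h1 : Tendsto (fun x : ℝ => x ^ (-(1/6:ℝ))) atTop (nhds 0) :=
        tendsto_rpow_neg_atTop (by norm_num)
      have h1n : Tendsto (fun d : ℕ => (d:ℝ) ^ (-(1/6:ℝ))) atTop (nhds 0) :=
        h1.comp tendsto_natCast_atTop_atTop
      have h2 : Tendsto (fun d : ℕ => (Real.log (d:ℝ))⁻¹) atTop (nhds 0) :=
        (Real.tendsto_log_atTop.comp tendsto_natCast_atTop_atTop).inv_tendsto_atTop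
      have := (h1n.const_mul (20:ℝ)).mul h2
      simpa using this
    have htend : Tendsto (fun d : ℕ =>
        (1 / (Real.sqrt d * Real.log d)) * ∑ i ∈ Finset.Icc 1 d, min (cubeGap i) (V i ω))
        atTop (nhds 0) := by
      apply tendsto_of_tendsto_of_tendsto_of_le_of_le' tendsto_const_nhds htendH
      · filter_upwards [eventually_ge_atTop 1] with d hd
        have hlog : 0 ≤ Real.log d := Real.log_nonneg (by exact_mod_cast hd)
        have h0 : 0 ≤ 1 / (Real.sqrt d * Real.log d) :=
          one_div_nonneg.mpr (mul_nonneg (Real.sqrt_nonneg _) hlog)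
        exact mul_nonneg h0 (hnn d)
      · filter_upwards [hub, eventually_ge_atTop 2] with d hd hd2
        have hd0 : (0:ℝ) < d := by
          have : (2:ℝ) ≤ d := by exact_mod_cast hd2
          linarith
        have hd1 : (1:ℝ) < (d:ℝ) := by exact_mod_cast (by omega : 1 < d)
        have hlog : 0 < Real.log d := Real.log_pos hd1
        have hfac : 0 ≤ 1 / (Real.sqrt d * Real.log d) :=
          one_div_nonneg.mpr (mul_nonneg (Real.sqrt_nonneg _) hlog.le)
        calc (1 / (Real.sqrt d * Real.log d)) * ∑ i ∈ Finset.Icc 1 d, min (cubeGap i) (V i ω)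
            ≤ (1 / (Real.sqrt d * Real.log d)) * (20 * (d:ℝ) ^ ((1:ℝ)/3)) :=
              mul_le_mul_of_nonneg_left hd hfac
          _ = 20 * (d:ℝ) ^ (-(1/6:ℝ)) * (Real.log d)⁻¹ := by
              rw [Real.sqrt_eq_rpow, show (-(1/6:ℝ)) = (1:ℝ)/3 - (1:ℝ)/2 by norm_num,
                Real.rpow_sub hd0]
              have hne1 : (d:ℝ) ^ ((1:ℝ)/2) ≠ 0 := ne_of_gt (Real.rpow_pos_of_pos hd0 _)
              field_simp
    exact htend.liminf_eq
end
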